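/- arXiv:2401.04622 — 2 statements merged into one kernel-verified Lean document; each statement's English description precedes it below -/
import Mathlib

section
/- For all λ₀, a₀, ρ₀ > 0 there exist an integer ℓ₀ ≥ 1 and a constant C > 0 such that for every integer ℓ ≥ ℓ₀ and all λ ∈ (0, λ₀], a ∈ (0, a₀], ρ ∈ (0, ρ₀], one has D_ℓ(λ) > 0 and |F_ℓ(λ)| ≤ C·(ℓ³/((λ²+a²)·λ))·(λρe/(2ℓ))^{2ℓ}. -/
open scoped Real Topology
open Filter Asymptotics

noncomputable def eulerGamma : ℝ := -deriv Real.Gamma 1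

noncomputable def harm (m : ℕ) : ℝ := ∑ j ∈ Finset.range m, (1 : ℝ)/(j+1)

noncomputable def besselJr (ℓ : ℕ) (x : ℝ) : ℝ :=
  ∑' k : ℕ, ((-1 : ℝ)^k / ((Nat.factorial k : ℝ) * (Nat.factorial (k + ℓ) : ℝ))) * (x/2)^(2*k + ℓ)

noncomputable def besselYr (ℓ : ℕ) (x : ℝ) : ℝ :=
  (2/Real.pi) * (Real.log (x/2) + eulerGamma) * besselJr ℓ x
  - (1/Real.pi) * ∑ k ∈ Finset.range ℓ,
      ((Nat.factorial (ℓ - k - 1) : ℝ) / (Nat.factorial k : ℝ)) * (x/2)^(2*(k:ℤ) - (ℓ:ℤ))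
  - (1/Real.pi) * ∑' k : ℕ,
      ((-1:ℝ)^k * (harm k + harm (k+ℓ)) / ((Nat.factorial k : ℝ) * (Nat.factorial (k+ℓ) : ℝ))) * (x/2)^(2*k+ℓ)

noncomputable def besselJn (ℓ : ℕ) (z : ℂ) : ℂ :=
  ∑' k : ℕ, ((-1 : ℂ)^k / ((Nat.factorial k : ℂ) * (Nat.factorial (k + ℓ) : ℂ))) * (z/2)^(2*k + ℓ)

noncomputable def besselJZ (ℓ : ℤ) (z : ℂ) : ℂ :=
  if 0 ≤ ℓ then besselJn ℓ.toNat z else (-1 : ℂ)^((-ℓ).toNat) * besselJn (-ℓ).toNat z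

noncomputable def besselYn (ℓ : ℕ) (z : ℂ) : ℂ :=
  (2/(Real.pi : ℂ)) * (Complex.log (z/2) + (eulerGamma : ℂ)) * besselJn ℓ z
  - (1/(Real.pi : ℂ)) * ∑ k ∈ Finset.range ℓ,
      ((Nat.factorial (ℓ - k - 1) : ℂ) / (Nat.factorial k : ℂ)) * (z/2)^(2*(k:ℤ) - (ℓ:ℤ))
  - (1/(Real.pi : ℂ)) * ∑' k : ℕ,
      ((-1:ℂ)^k * ((harm k : ℝ) + (harm (k+ℓ) : ℝ)) / ((Nat.factorial k : ℂ) * (Nat.factorial (k+ℓ) : ℂ))) * (z/2)^(2*k+ℓ)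

noncomputable def besselYZ (ℓ : ℤ) (z : ℂ) : ℂ :=
  if 0 ≤ ℓ then besselYn ℓ.toNat z else (-1 : ℂ)^((-ℓ).toNat) * besselYn (-ℓ).toNat z

noncomputable def hankelH1 (ℓ : ℤ) (z : ℂ) : ℂ := besselJZ ℓ z + Complex.I * besselYZ ℓ z

noncomputable def hankelH1n (ℓ : ℕ) (z : ℂ) : ℂ := besselJn ℓ z + Complex.I * besselYn ℓ z
noncomputable def hankelH2n (ℓ : ℕ) (z : ℂ) : ℂ := besselJn ℓ z - Complex.I * besselYn ℓ z

noncomputable def muC (a : ℝ) (lam : ℂ) : ℂ := (lam^2 + (a:ℂ)^2) ^ ((1:ℂ)/2)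

noncomputable def Qfun (ρ : ℝ) (ℓ : ℤ) (lam : ℂ) (a : ℝ) : ℂ :=
  muC a lam * besselJZ (ℓ-1) ((ρ:ℂ) * muC a lam) * hankelH1 ℓ (lam * (ρ:ℂ))
  - lam * besselJZ ℓ ((ρ:ℂ) * muC a lam) * hankelH1 (ℓ-1) (lam * (ρ:ℂ))

noncomputable def Dfun (a ρ : ℝ) (ℓ : ℕ) (lam : ℝ) : ℝ :=
  (Real.sqrt (lam^2+a^2) * besselJr (ℓ-1) (Real.sqrt (lam^2+a^2)*ρ) * besselJr ℓ (lam*ρ)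
    - lam * besselJr ℓ (Real.sqrt (lam^2+a^2)*ρ) * besselJr (ℓ-1) (lam*ρ))^2
  + (Real.sqrt (lam^2+a^2) * besselJr (ℓ-1) (Real.sqrt (lam^2+a^2)*ρ) * besselYr ℓ (lam*ρ)
    - lam * besselJr ℓ (Real.sqrt (lam^2+a^2)*ρ) * besselYr (ℓ-1) (lam*ρ))^2

noncomputable def Ffun (a ρ : ℝ) (ℓ : ℕ) (lam : ℝ) : ℝ :=
  (2*a^2/(Real.pi^2*lam)) * besselJr (ℓ-1) (Real.sqrt (lam^2+a^2)*ρ)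
    * besselJr (ℓ+1) (Real.sqrt (lam^2+a^2)*ρ) / Dfun a ρ ℓ lam

noncomputable def D0fun (a ρ : ℝ) (lam : ℝ) : ℝ :=
  (Real.sqrt (lam^2+a^2) * besselJr 1 (Real.sqrt (lam^2+a^2)*ρ) * besselJr 0 (lam*ρ)
    - lam * besselJr 0 (Real.sqrt (lam^2+a^2)*ρ) * besselJr 1 (lam*ρ))^2
  + (Real.sqrt (lam^2+a^2) * besselJr 1 (Real.sqrt (lam^2+a^2)*ρ) * besselYr 0 (lam*ρ)
    - lam * besselJr 0 (Real.sqrt (lam^2+a^2)*ρ) * besselYr 1 (lam*ρ))^2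

noncomputable def F0fun (a ρ : ℝ) (lam : ℝ) : ℝ :=
  -(2*a^2/(Real.pi^2*lam)) * (besselJr 1 (Real.sqrt (lam^2+a^2)*ρ))^2 / D0fun a ρ lam

lemma abs_tsum_le_of_abs_le {f g : ℕ → ℝ} (hg : Summable g) (h : ∀ k, |f k| ≤ g k) :
    |∑' k, f k| ≤ ∑' k, g k := by
  have habs : Summable (fun k => |f k|) := hg.of_nonneg_of_le (fun k => abs_nonneg _) h
  have hn : Summable (fun k => ‖f k‖) := by simpa [Real.norm_eq_abs] using habs
  calc |∑' k, f k| = ‖∑' k, f k‖ := (Real.norm_eq_abs _).symm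
    _ ≤ ∑' k, ‖f k‖ := norm_tsum_le_tsum_norm hn
    _ = ∑' k, |f k| := by simp [Real.norm_eq_abs]
    _ ≤ ∑' k, g k := Summable.tsum_le_tsum h habs hg

lemma J_term_abs (ℓ : ℕ) (x : ℝ) (k : ℕ) :
    |((-1 : ℝ)^k / ((Nat.factorial k : ℝ) * (Nat.factorial (k + ℓ) : ℝ))) * (x/2)^(2*k + ℓ)|
      = |x/2|^(2*k+ℓ) / ((Nat.factorial k : ℝ) * (Nat.factorial (k + ℓ) : ℝ)) := by
  rw [abs_mul, abs_div, abs_pow, abs_pow, abs_neg, abs_one, one_pow, abs_mul,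
    Nat.abs_cast, Nat.abs_cast]
  ring

lemma summable_J_term (ℓ : ℕ) (x : ℝ) :
    Summable (fun k : ℕ => ((-1 : ℝ)^k / ((Nat.factorial k : ℝ) * (Nat.factorial (k + ℓ) : ℝ))) * (x/2)^(2*k + ℓ)) := by
  apply Summable.of_norm_bounded (g := fun k => |x/2|^ℓ * (((x/2)^2)^k / (Nat.factorial k : ℝ)))
    (((Real.summable_pow_div_factorial ((x/2)^2))).mul_left _)
  intro k
  have h1 : (1:ℝ) ≤ (Nat.factorial (k+ℓ) : ℝ) := by
    exact_mod_cast Nat.one_le_iff_ne_zero.mpr (Nat.factorial_ne_zero _)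
  have hk : (0:ℝ) < (Nat.factorial k : ℝ) := by positivity
  rw [Real.norm_eq_abs, J_term_abs]
  calc |x/2|^(2*k+ℓ) / ((Nat.factorial k : ℝ) * (Nat.factorial (k + ℓ) : ℝ))
      ≤ |x/2|^(2*k+ℓ) / ((Nat.factorial k : ℝ) * 1) := by
        gcongr

    _ = |x/2|^ℓ * (((x/2)^2)^k / (Nat.factorial k : ℝ)) := by
        rw [pow_add, pow_mul, sq_abs]; ring

lemma fact_mul_pow_le (m j : ℕ) : m.factorial * (m+1)^j ≤ (j+m).factorial := by
  induction j with
  | zero => simp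
  | succ j ih =>
    have : (j+1+m).factorial = (j+m+1) * (j+m).factorial := by
      rw [show j+1+m = (j+m)+1 by ring, Nat.factorial_succ]
    rw [this, pow_succ, ← mul_assoc]
    calc m.factorial * (m+1)^j * (m+1) ≤ (j+m).factorial * (m+1) := by
          exact Nat.mul_le_mul_right _ ih
      _ ≤ (j+m).factorial * (j+m+1) := by
          exact Nat.mul_le_mul_left _ (by omega)
      _ = (j+m+1) * (j+m).factorial := by ring

lemma J_term_le (m j : ℕ) (x : ℝ) (hx : 0 ≤ x) (ht : 3*(x/2)^2 ≤ (m:ℝ)+1) :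
    |((-1 : ℝ)^j / ((Nat.factorial j : ℝ) * (Nat.factorial (j + m) : ℝ))) * (x/2)^(2*j + m)|
      ≤ ((x/2)^m / (Nat.factorial m : ℝ)) * (1/3)^j := by
  rw [J_term_abs, abs_of_nonneg (by positivity : (0:ℝ) ≤ x/2)]
  have hfm : (0:ℝ) < (Nat.factorial m : ℝ) := by positivity
  have hfj : (0:ℝ) < (Nat.factorial j : ℝ) := by positivity
  have hkey : ((Nat.factorial m : ℝ) * ((m:ℝ)+1)^j) ≤ ((Nat.factorial j : ℝ) * (Nat.factorial (j+m) : ℝ)) := by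
    have h1 := fact_mul_pow_le m j
    have h2 : (1:ℕ) ≤ j.factorial := Nat.one_le_iff_ne_zero.mpr (Nat.factorial_ne_zero _)
    calc ((Nat.factorial m : ℝ) * ((m:ℝ)+1)^j) = ((m.factorial * (m+1)^j : ℕ) : ℝ) := by push_cast; ring
      _ ≤ (((j+m).factorial : ℕ) : ℝ) := by exact_mod_cast h1
      _ ≤ ((Nat.factorial j : ℝ) * (Nat.factorial (j+m) : ℝ)) := by
          rw [← Nat.cast_mul]; exact_mod_cast Nat.le_mul_of_pos_left _ (by omega)
  have ht' : (x/2)^2/((m:ℝ)+1) ≤ 1/3 := by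
    rw [div_le_div_iff₀ (by positivity) (by norm_num)]; linarith
  calc (x/2)^(2*j+m) / ((Nat.factorial j : ℝ) * (Nat.factorial (j + m) : ℝ))
      ≤ (x/2)^(2*j+m) / ((Nat.factorial m : ℝ) * ((m:ℝ)+1)^j) := by
        gcongr
      _ = ((x/2)^m / (Nat.factorial m : ℝ)) * ((x/2)^2/((m:ℝ)+1))^j := by
        rw [show ((x/2)^2/((m:ℝ)+1))^j = ((x/2)^2)^j / ((m:ℝ)+1)^j from div_pow _ _ _,
          div_mul_div_comm, pow_add, pow_mul]; ring
      _ ≤ ((x/2)^m / (Nat.factorial m : ℝ)) * (1/3)^j := by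
        gcongr

lemma Jr_err (m : ℕ) (x : ℝ) (hx : 0 ≤ x) (ht : 3*(x/2)^2 ≤ (m:ℝ)+1) :
    |besselJr m x - (x/2)^m / (Nat.factorial m : ℝ)| ≤ (1/2) * ((x/2)^m / (Nat.factorial m : ℝ)) := by
  set f : ℕ → ℝ := fun k => ((-1 : ℝ)^k / ((Nat.factorial k : ℝ) * (Nat.factorial (k + m) : ℝ))) * (x/2)^(2*k + m) with hf
  have hs := summable_J_term m x
  have hsplit : besselJr m x = f 0 + ∑' k, f (k+1) := by
    rw [besselJr]; exact Summable.tsum_eq_zero_add hs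
  have hf0 : f 0 = (x/2)^m / (Nat.factorial m : ℝ) := by simp [hf, div_eq_mul_inv, mul_comm]
  have hA : (0:ℝ) ≤ (x/2)^m / (Nat.factorial m : ℝ) := by positivity
  set A := (x/2)^m / (Nat.factorial m : ℝ)
  have hgsum : Summable (fun k : ℕ => A * (1/3:ℝ)^(k+1)) := by
    apply Summable.mul_left
    exact (summable_geometric_of_lt_one (by norm_num) (by norm_num)).comp_injective (add_left_injective 1)
  have htail : |∑' k, f (k+1)| ≤ A * (1/2) := by
    calc |∑' k, f (k+1)| ≤ ∑' k : ℕ, A * (1/3:ℝ)^(k+1) := by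
          apply abs_tsum_le_of_abs_le hgsum
          intro k
          simp only [hf]
          exact J_term_le m (k+1) x hx ht
      _ = A * ((1/3) * (1-1/3:ℝ)⁻¹) := by
          rw [tsum_mul_left]
          congr 1
          simp only [pow_succ, mul_comm]
          rw [tsum_mul_left, tsum_geometric_of_lt_one (by norm_num) (by norm_num)]
      _ = A * (1/2) := by norm_num
  rw [hsplit, hf0]
  simpa [abs_sub_comm] using htail.trans_eq (by ring)

lemma descfact_bound (n : ℕ) : ∀ k, k ≤ n → (n-k).factorial * n^k ≤ n.factorial * k.factorial := by
  intro k
  induction k with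
  | zero => simp
  | succ k ih =>
    intro hk
    have ih' := ih (by omega)
    have h1 : n ≤ (k+1) * (n-k) := by
      obtain ⟨d, hd⟩ : ∃ d, n - k = d + 1 := ⟨n - k - 1, by omega⟩
      have hn : n = k + (d + 1) := by omega
      rw [hd, hn]; nlinarith
    have h2 : (n-k).factorial = (n-k) * (n-(k+1)).factorial := by
      have e : n - k = (n-(k+1)) + 1 := by omega
      rw [e, Nat.factorial_succ]
    calc (n-(k+1)).factorial * n^(k+1) = n * (n-(k+1)).factorial * n^k := by ring
      _ ≤ ((k+1) * (n-k)) * (n-(k+1)).factorial * n^k := by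
          exact Nat.mul_le_mul_right _ (Nat.mul_le_mul_right _ h1)
      _ = (k+1) * ((n-k).factorial * n^k) := by rw [h2]; ring
      _ ≤ (k+1) * (n.factorial * k.factorial) := Nat.mul_le_mul_left _ ih'
      _ = n.factorial * (k+1).factorial := by rw [Nat.factorial_succ]; ring

lemma harm_nonneg (m : ℕ) : 0 ≤ harm m :=
  Finset.sum_nonneg (fun j _ => by positivity)

lemma harm_le (m : ℕ) : harm m ≤ m := by
  calc harm m ≤ ∑ j ∈ Finset.range m, (1:ℝ) := by
        apply Finset.sum_le_sum
        intro j _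
        rw [div_le_one (by positivity)]
        linarith [Nat.cast_nonneg (α := ℝ) j]
    _ = m := by simp

lemma log_pow_bound (u K : ℝ) (m : ℕ) (hm : 1 ≤ m) (hu : 0 < u) (hK : 1 ≤ K) (huK : u ≤ K) :
    u^(2*m) * |Real.log u| ≤ (1+K) * K^(2*m) := by
  have hK0 : (0:ℝ) < K := by linarith
  rcases le_or_gt u 1 with h | h
  · have hlog : |Real.log u| ≤ 1/u := by
      rw [abs_of_nonpos (Real.log_nonpos hu.le h)]
      have := Real.log_le_sub_one_of_pos (show (0:ℝ) < 1/u by positivity)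
      rw [Real.log_div one_ne_zero hu.ne', Real.log_one] at this
      linarith [div_nonneg (zero_le_one) hu.le]
    calc u^(2*m) * |Real.log u| ≤ u^(2*m) * (1/u) := by gcongr
      _ = u^(2*m-1) := by
          rw [show 2*m = (2*m-1)+1 by omega, pow_succ]; field_simp; simp
      _ ≤ 1 := pow_le_one₀ hu.le h
      _ ≤ (1+K) * K^(2*m) := by
          have : (1:ℝ) ≤ K^(2*m) := one_le_pow₀ hK
          nlinarith
  · have hlog : |Real.log u| ≤ K := by
      rw [abs_of_nonneg (Real.log_nonneg h.le)]
      calc Real.log u ≤ u - 1 := Real.log_le_sub_one_of_pos hu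
        _ ≤ K := by linarith
    calc u^(2*m) * |Real.log u| ≤ K^(2*m) * K :=
        mul_le_mul (pow_le_pow_left₀ hu.le huK _) hlog (abs_nonneg _) (by positivity)
      _ ≤ (1+K) * K^(2*m) := by nlinarith [pow_pos hK0 (2*m)]

lemma S_lower (m : ℕ) (x : ℝ) (hm : 1 ≤ m) (hx : 0 < x) :
    ((m-1).factorial : ℝ) * ((x/2)^m)⁻¹
      ≤ ∑ k ∈ Finset.range m, ((Nat.factorial (m - k - 1) : ℝ) / (Nat.factorial k : ℝ)) * (x/2)^(2*(k:ℤ) - (m:ℤ)) := by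
  have hu : (0:ℝ) < x/2 := by positivity
  have h0 : (0:ℕ) ∈ Finset.range m := Finset.mem_range.mpr (by omega)
  have hterm0 : ((Nat.factorial (m - 0 - 1) : ℝ) / (Nat.factorial 0 : ℝ)) * (x/2)^(2*((0:ℕ):ℤ) - (m:ℤ))
      = ((m-1).factorial : ℝ) * ((x/2)^m)⁻¹ := by
    simp [zpow_neg, zpow_natCast]
  calc ((m-1).factorial : ℝ) * ((x/2)^m)⁻¹
      = ((Nat.factorial (m - 0 - 1) : ℝ) / (Nat.factorial 0 : ℝ)) * (x/2)^(2*((0:ℕ):ℤ) - (m:ℤ)) := hterm0.symm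
    _ ≤ _ := Finset.single_le_sum (f := fun k => ((Nat.factorial (m - k - 1) : ℝ) / (Nat.factorial k : ℝ)) * (x/2)^(2*(k:ℤ) - (m:ℤ)))
        (fun k _ => by positivity) h0

lemma ratio_bound (F G kf w n : ℝ) (k : ℕ) (hF : 0 ≤ F) (hkf : 0 < kf) (hn : 0 < n) (hG : 0 ≤ G)
    (h1 : F * n^k ≤ G * kf) (hw : 0 ≤ w) (h2 : w/n ≤ 1/3) : (F/kf) * w^k ≤ G * (1/3)^k := by
  have h3 : w^k/n^k ≤ (1/3)^k := by
    rw [← div_pow]; exact pow_le_pow_left₀ (by positivity) h2 k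
  rw [div_mul_eq_mul_div, div_le_iff₀ hkf]
  calc F * w^k = (F*n^k) * (w^k/n^k) := by field_simp
    _ ≤ (G*kf) * (1/3)^k := mul_le_mul h1 h3 (by positivity) (by positivity)
    _ = G*(1/3)^k*kf := by ring

lemma S_upper (m : ℕ) (x : ℝ) (hm : 2 ≤ m) (hx : 0 < x) (ht : 3*(x/2)^2 ≤ (m:ℝ)-1) :
    ∑ k ∈ Finset.range m, ((Nat.factorial (m - k - 1) : ℝ) / (Nat.factorial k : ℝ)) * (x/2)^(2*(k:ℤ) - (m:ℤ))
      ≤ (3/2) * ((m-1).factorial : ℝ) * ((x/2)^m)⁻¹ := by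
  have hu : (0:ℝ) < x/2 := by positivity
  have hn1 : (1:ℝ) ≤ ((m:ℝ)-1) := by
    have : (2:ℝ) ≤ m := by exact_mod_cast hm
    linarith
  have key : ∀ k ∈ Finset.range m,
      ((Nat.factorial (m - k - 1) : ℝ) / (Nat.factorial k : ℝ)) * (x/2)^(2*(k:ℤ) - (m:ℤ))
        ≤ ((m-1).factorial : ℝ) * (1/3)^k * ((x/2)^m)⁻¹ := by
    intro k hk
    rw [Finset.mem_range] at hk
    have hzp : (x/2:ℝ)^(2*(k:ℤ) - (m:ℤ)) = (x/2)^(2*k) * ((x/2)^m)⁻¹ := by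
      rw [zpow_sub₀ hu.ne', div_eq_mul_inv]
      norm_cast
    rw [hzp, ← mul_assoc]
    gcongr ?_ * _
    have hnat := descfact_bound (m-1) k (by omega)
    have hcast : ((m-k-1).factorial : ℝ) * ((m:ℝ)-1)^k ≤ ((m-1).factorial : ℝ) * (k.factorial : ℝ) := by
      have e1 : m - k - 1 = (m-1) - k := by omega
      have e2 : ((m:ℝ)-1) = ((m-1 : ℕ) : ℝ) := by
        have : (1:ℝ) ≤ (m:ℝ) := by exact_mod_cast (by omega : 1 ≤ m)
        push_cast [Nat.cast_sub (by omega : 1 ≤ m)]; ring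
      rw [e1, e2, ← Nat.cast_pow, ← Nat.cast_mul, ← Nat.cast_mul]
      exact_mod_cast hnat
    have hfk : (0:ℝ) < (k.factorial : ℝ) := by positivity
    have htk : ((x/2)^2/((m:ℝ)-1)) ≤ 1/3 := by
      rw [div_le_div_iff₀ (by linarith) (by norm_num)]; linarith
    rw [pow_mul]
    exact ratio_bound _ _ _ _ _ k (by positivity) hfk (by linarith) (by positivity)
      hcast (by positivity) htk
  calc ∑ k ∈ Finset.range m, ((Nat.factorial (m - k - 1) : ℝ) / (Nat.factorial k : ℝ)) * (x/2)^(2*(k:ℤ) - (m:ℤ))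
      ≤ ∑ k ∈ Finset.range m, ((m-1).factorial : ℝ) * (1/3)^k * ((x/2)^m)⁻¹ :=
        Finset.sum_le_sum key
    _ = (((m-1).factorial : ℝ) * ((x/2)^m)⁻¹) * ∑ k ∈ Finset.range m, (1/3:ℝ)^k := by
        rw [Finset.mul_sum]; apply Finset.sum_congr rfl; intro k _; ring
    _ ≤ (((m-1).factorial : ℝ) * ((x/2)^m)⁻¹) * (3/2) := by
        gcongr
        calc ∑ k ∈ Finset.range m, (1/3:ℝ)^k
            ≤ ∑' k : ℕ, (1/3:ℝ)^k := Summable.sum_le_tsum _ (fun k _ => by positivity)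
              (summable_geometric_of_lt_one (by norm_num) (by norm_num))
          _ = (1-1/3:ℝ)⁻¹ := tsum_geometric_of_lt_one (by norm_num) (by norm_num)
          _ ≤ 3/2 := by norm_num
    _ = (3/2) * ((m-1).factorial : ℝ) * ((x/2)^m)⁻¹ := by ring

lemma T_bound (m : ℕ) (x : ℝ) (hm : 1 ≤ m) (hx : 0 ≤ x) (ht : 3*(x/2)^2 ≤ (m:ℝ)+1) :
    |∑' k : ℕ, ((-1:ℝ)^k * (harm k + harm (k+m)) / ((Nat.factorial k : ℝ) * (Nat.factorial (k+m) : ℝ))) * (x/2)^(2*k+m)|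
      ≤ 5*(m:ℝ) * ((x/2)^m / (Nat.factorial m : ℝ)) := by
  set A := (x/2)^m / (Nat.factorial m : ℝ) with hA
  have hA0 : 0 ≤ A := by positivity
  have hr : ‖(1/3 : ℝ)‖ < 1 := by
    rw [Real.norm_eq_abs, abs_of_nonneg (by norm_num : (0:ℝ) ≤ 1/3)]; norm_num
  have hsum1 : Summable (fun k : ℕ => (1/3:ℝ)^k) := summable_geometric_of_lt_one (by norm_num) (by norm_num)
  have hsum2 : Summable (fun k : ℕ => (k:ℝ) * (1/3:ℝ)^k) := by
    simpa using summable_pow_mul_geometric_of_norm_lt_one 1 hr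
  have hgsum : Summable (fun k : ℕ => A * (2*((k:ℝ)+(m:ℝ)) * (1/3)^k)) := by
    apply Summable.mul_left
    have : (fun k : ℕ => 2*((k:ℝ)+(m:ℝ)) * (1/3:ℝ)^k)
        = fun k : ℕ => 2*((k:ℝ)*(1/3:ℝ)^k) + (2*(m:ℝ))*(1/3:ℝ)^k := by
      funext k; ring
    rw [this]
    exact ((hsum2.mul_left 2).add (hsum1.mul_left _))
  have hterm : ∀ k : ℕ,
      |((-1:ℝ)^k * (harm k + harm (k+m)) / ((Nat.factorial k : ℝ) * (Nat.factorial (k+m) : ℝ))) * (x/2)^(2*k+m)|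
        ≤ A * (2*((k:ℝ)+(m:ℝ)) * (1/3)^k) := by
    intro k
    have hh : 0 ≤ harm k + harm (k+m) := add_nonneg (harm_nonneg _) (harm_nonneg _)
    have hhle : harm k + harm (k+m) ≤ 2*((k:ℝ)+(m:ℝ)) := by
      have h1 := harm_le k
      have h2 := harm_le (k+m)
      push_cast at h2 ⊢
      linarith [Nat.cast_nonneg (α := ℝ) k]
    have hJ := J_term_le m k x hx ht
    calc |((-1:ℝ)^k * (harm k + harm (k+m)) / ((Nat.factorial k : ℝ) * (Nat.factorial (k+m) : ℝ))) * (x/2)^(2*k+m)|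
        = |(harm k + harm (k+m)) * (((-1:ℝ)^k / ((Nat.factorial k : ℝ) * (Nat.factorial (k+m) : ℝ))) * (x/2)^(2*k+m))| := by
          congr 1
          ring
      _ = (harm k + harm (k+m)) * |((-1:ℝ)^k / ((Nat.factorial k : ℝ) * (Nat.factorial (k+m) : ℝ))) * (x/2)^(2*k+m)| := by
          rw [abs_mul, abs_of_nonneg hh]
      _ ≤ (2*((k:ℝ)+(m:ℝ))) * (A * (1/3)^k) := by
          apply mul_le_mul hhle hJ (abs_nonneg _) (by positivity)
      _ = A * (2*((k:ℝ)+(m:ℝ)) * (1/3)^k) := by ring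
  calc |∑' k : ℕ, ((-1:ℝ)^k * (harm k + harm (k+m)) / ((Nat.factorial k : ℝ) * (Nat.factorial (k+m) : ℝ))) * (x/2)^(2*k+m)|
      ≤ ∑' k : ℕ, A * (2*((k:ℝ)+(m:ℝ)) * (1/3)^k) := abs_tsum_le_of_abs_le hgsum hterm
    _ = A * (2 * ((1/3)/(1-1/3)^2) + 2*(m:ℝ) * (1-1/3:ℝ)⁻¹) := by
        rw [tsum_mul_left]
        congr 1
        have e : (fun k : ℕ => 2*((k:ℝ)+(m:ℝ)) * (1/3:ℝ)^k)
            = fun k : ℕ => 2*((k:ℝ)*(1/3:ℝ)^k) + (2*(m:ℝ))*((1/3:ℝ)^k) := by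
          funext k; ring
        rw [e, Summable.tsum_add (hsum2.mul_left 2) (hsum1.mul_left _), tsum_mul_left, tsum_mul_left,
          tsum_geometric_of_lt_one (by norm_num) (by norm_num),
          tsum_coe_mul_geometric_of_norm_lt_one hr]
    _ ≤ A * (5*(m:ℝ)) := by
        apply mul_le_mul_of_nonneg_left _ hA0
        have hm1 : (1:ℝ) ≤ (m:ℝ) := by exact_mod_cast hm
        norm_num
        linarith
    _ = 5*(m:ℝ) * A := by ring

set_option maxHeartbeats 1000000 in

lemma Ybound (m : ℕ) (x K : ℝ) (hm : 2 ≤ m) (hx : 0 < x) (hK : 1 ≤ K) (hxK : x/2 ≤ K)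
    (ht : 3*(x/2)^2 ≤ (m:ℝ)-1)
    (hsmall : (11+3*K+3*|eulerGamma|) * (m:ℝ)^3 * K^(2*m) ≤ ((Nat.factorial m : ℝ))^2/2) :
    (1/(2*Real.pi)) * (((m-1).factorial:ℝ) * ((x/2)^m)⁻¹) ≤ -besselYr m x ∧
    -besselYr m x ≤ (2/Real.pi) * (((m-1).factorial:ℝ) * ((x/2)^m)⁻¹) := by
  have hπ := Real.pi_pos
  have hm1 : (1:ℝ) ≤ (m:ℝ) := by exact_mod_cast (by omega : 1 ≤ m)
  have hmR : (2:ℝ) ≤ (m:ℝ) := by exact_mod_cast hm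
  have hu : (0:ℝ) < x/2 := by positivity
  set u := x/2 with hu_def
  set S := ∑ k ∈ Finset.range m, ((Nat.factorial (m - k - 1) : ℝ) / (Nat.factorial k : ℝ)) * (u)^(2*(k:ℤ) - (m:ℤ)) with hS_def
  set T := ∑' k : ℕ, ((-1:ℝ)^k * (harm k + harm (k+m)) / ((Nat.factorial k : ℝ) * (Nat.factorial (k+m) : ℝ))) * u^(2*k+m) with hT_def
  set J := besselJr m x with hJ_def
  set L := (2/Real.pi) * (Real.log u + eulerGamma) * J with hL_def
  set A := u^m / (Nat.factorial m : ℝ) with hA_def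
  set F := ((m-1).factorial:ℝ) * (u^m)⁻¹ with hF_def
  have hA0 : 0 ≤ A := by positivity
  have hF0 : 0 < F := by positivity
  have hYdef : -besselYr m x = (1/Real.pi)*S + ((1/Real.pi)*T - L) := by
    rw [besselYr]; ring
  have ht' : 3*u^2 ≤ (m:ℝ)+1 := by linarith
  have hSl : F ≤ S := S_lower m x (by omega) hx
  have hSu : S ≤ (3/2) * ((m-1).factorial:ℝ) * (u^m)⁻¹ := S_upper m x hm hx ht
  have hT5 : |T| ≤ 5*(m:ℝ) * A := T_bound m x (by omega) hx.le ht'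
  have hJe : |J - A| ≤ (1/2) * A := Jr_err m x hx.le ht'
  clear_value u S T J L A F
  have hJ32 : |J| ≤ (3/2) * A := by
    have h1 : |J| ≤ |J - A| + |A| := by simpa using abs_add_le (J - A) A
    rw [abs_of_nonneg hA0] at h1
    linarith
  have hL32 : |L| ≤ (2/Real.pi) * ((|Real.log u| + |eulerGamma|) * ((3/2) * A)) := by
    rw [hL_def, mul_assoc, abs_mul, abs_of_nonneg (by positivity : (0:ℝ) ≤ 2/Real.pi)]
    gcongr
    rw [abs_mul]
    exact mul_le_mul (abs_add_le _ _) hJ32 (abs_nonneg _) (by positivity)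
  -- the core numeric estimate
  have hu2K : u^(2*m) ≤ K^(2*m) := pow_le_pow_left₀ hu.le hxK _
  have hlogK : u^(2*m) * |Real.log u| ≤ (1+K) * K^(2*m) :=
    log_pow_bound u K m (by omega) hu hK hxK
  have hKp : (0:ℝ) < K^(2*m) := by positivity
  have hγ : (0:ℝ) ≤ |eulerGamma| := abs_nonneg _
  have hfacm : ((Nat.factorial m : ℝ)) = (m:ℝ) * ((m-1).factorial : ℝ) := by
    rw [← Nat.cast_mul]
    exact_mod_cast (congrArg (Nat.cast (R := ℝ)) (Nat.mul_factorial_pred (by omega))).symm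
  have hchain : u^(2*m) * (5*(m:ℝ) + 3*|Real.log u| + 3*|eulerGamma|)
      ≤ (Nat.factorial m : ℝ) * ((m-1).factorial : ℝ) / 2 := by
    have e1 : u^(2*m) * (5*(m:ℝ) + 3*|Real.log u| + 3*|eulerGamma|)
        = 5*(m:ℝ)*u^(2*m) + 3*(u^(2*m)*|Real.log u|) + 3*|eulerGamma| *u^(2*m) := by ring
    have step1 : u^(2*m) * (5*(m:ℝ) + 3*|Real.log u| + 3*|eulerGamma|)
        ≤ (11+3*K+3*|eulerGamma|)*(m:ℝ)*K^(2*m) := by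
      rw [e1]
      have b1 : 5*(m:ℝ)*u^(2*m) ≤ 5*(m:ℝ)*K^(2*m) := by gcongr
      have b2 : 3*(u^(2*m)*|Real.log u|) ≤ 3*((1+K)*K^(2*m)) := by linarith
      have b3 : 3*|eulerGamma| *u^(2*m) ≤ 3*|eulerGamma| *K^(2*m) := by gcongr
      nlinarith [mul_nonneg (by linarith : (0:ℝ) ≤ (m:ℝ)-1) hKp.le,
        mul_nonneg (mul_nonneg (by linarith : (0:ℝ) ≤ K) hKp.le) (by linarith : (0:ℝ) ≤ (m:ℝ)-1),
        mul_nonneg (mul_nonneg hγ hKp.le) (by linarith : (0:ℝ) ≤ (m:ℝ)-1)]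
    have step2 : (11+3*K+3*|eulerGamma|)*(m:ℝ)*K^(2*m) ≤ ((Nat.factorial m : ℝ))^2/(2*(m:ℝ)^2) := by
      rw [le_div_iff₀ (by positivity)]
      calc (11+3*K+3*|eulerGamma|)*(m:ℝ)*K^(2*m) * (2*(m:ℝ)^2)
          = ((11+3*K+3*|eulerGamma|) * (m:ℝ)^3 * K^(2*m)) * 2 := by ring
        _ ≤ (((Nat.factorial m : ℝ))^2/2) * 2 := by linarith
        _ = ((Nat.factorial m : ℝ))^2 := by ring
    have step3 : ((Nat.factorial m : ℝ))^2/(2*(m:ℝ)^2) ≤ (Nat.factorial m : ℝ) * ((m-1).factorial : ℝ) / 2 := by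
      rw [hfacm]
      rw [div_le_div_iff₀ (by positivity) (by norm_num)]
      nlinarith [sq_nonneg ((m-1).factorial : ℝ), mul_pos (by linarith : (0:ℝ) < (m:ℝ)) (by positivity : (0:ℝ) < ((m-1).factorial : ℝ))]
    linarith
  -- error ≤ F/2 (after multiplying out)
  have hG : 5*(m:ℝ)*A + 3*(|Real.log u| + |eulerGamma|)*A ≤ F/2 := by
    have hpos : (0:ℝ) < (Nat.factorial m : ℝ) * u^m := by positivity
    rw [← mul_le_mul_iff_of_pos_right hpos]
    have eL : (5*(m:ℝ)*A + 3*(|Real.log u| + |eulerGamma|)*A) * ((Nat.factorial m : ℝ) * u^m)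
        = u^(2*m) * (5*(m:ℝ) + 3*|Real.log u| + 3*|eulerGamma|) := by
      rw [hA_def]
      field_simp
      ring
    have eR : F/2 * ((Nat.factorial m : ℝ) * u^m)
        = (Nat.factorial m : ℝ) * ((m-1).factorial : ℝ) / 2 := by
      rw [hF_def]
      field_simp
    rw [eL, eR]
    exact hchain
  have hErr : |(1/Real.pi)*T - L| ≤ (1/Real.pi) * (F/2) := by
    calc |(1/Real.pi)*T - L| ≤ |(1/Real.pi)*T| + |L| := abs_sub _ _
      _ = (1/Real.pi)*|T| + |L| := by
          rw [abs_mul, abs_of_nonneg (by positivity : (0:ℝ) ≤ 1/Real.pi)]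
      _ ≤ (1/Real.pi)*(5*(m:ℝ)*A) + (2/Real.pi) * ((|Real.log u| + |eulerGamma|) * ((3/2) * A)) := by
          gcongr
      _ = (1/Real.pi) * (5*(m:ℝ)*A + 3*(|Real.log u| + |eulerGamma|)*A) := by ring
      _ ≤ (1/Real.pi) * (F/2) := by
          apply mul_le_mul_of_nonneg_left hG (by positivity)
  have hErr' := abs_le.mp hErr
  have hSu' : S ≤ (3/2)*F := by rw [hF_def]; linarith [hSu]
  constructor
  · have h1 : (1/Real.pi)*F ≤ (1/Real.pi)*S := mul_le_mul_of_nonneg_left hSl (by positivity)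
    have e : (1/(2*Real.pi)) * F = (1/Real.pi)*F - (1/Real.pi)*(F/2) := by
      field_simp
      ring
    rw [hYdef, e]
    linarith [hErr'.1]
  · have h1 : (1/Real.pi)*S ≤ (1/Real.pi)*((3/2)*F) := mul_le_mul_of_nonneg_left hSu' (by positivity)
    have e : (2/Real.pi) * F = (1/Real.pi)*((3/2)*F) + (1/Real.pi)*(F/2) := by
      field_simp
      ring
    rw [hYdef, e]
    linarith [hErr'.2]

lemma Jr_lower (m : ℕ) (x : ℝ) (hx : 0 ≤ x) (ht : 3*(x/2)^2 ≤ (m:ℝ)+1) :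
    (1/2) * ((x/2)^m / (Nat.factorial m : ℝ)) ≤ besselJr m x := by
  have h := abs_le.mp (Jr_err m x hx ht)
  linarith [h.1]

lemma Jr_upper (m : ℕ) (x : ℝ) (hx : 0 ≤ x) (ht : 3*(x/2)^2 ≤ (m:ℝ)+1) :
    besselJr m x ≤ (3/2) * ((x/2)^m / (Nat.factorial m : ℝ)) := by
  have h := abs_le.mp (Jr_err m x hx ht)
  linarith [h.2]

lemma pow_self_le (ℓ : ℕ) : ((ℓ:ℝ))^ℓ ≤ (Real.exp 1)^ℓ * (ℓ.factorial : ℝ) := by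
  have h := Real.pow_div_factorial_le_exp (x := (ℓ:ℝ)) (Nat.cast_nonneg ℓ) ℓ
  have he : Real.exp (ℓ:ℝ) = (Real.exp 1)^ℓ := by
    rw [← Real.exp_nat_mul]; norm_num
  have hf : (0:ℝ) < (ℓ.factorial : ℝ) := by positivity
  rw [div_le_iff₀ hf, he] at h
  exact h

set_option maxHeartbeats 2000000 in
/-- uniform large-`ℓ` bound for the phase shift derivatives. -/
theorem stmt_11 (lam₀ a₀ ρ₀ : ℝ) (hlam₀ : 0 < lam₀) (ha₀ : 0 < a₀) (hρ₀ : 0 < ρ₀) :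
    ∃ ℓ₀ : ℕ, 1 ≤ ℓ₀ ∧ ∃ C > (0:ℝ), ∀ ℓ : ℕ, ℓ₀ ≤ ℓ →
      ∀ lam a ρ : ℝ, 0 < lam → lam ≤ lam₀ → 0 < a → a ≤ a₀ → 0 < ρ → ρ ≤ ρ₀ →
        0 < Dfun a ρ ℓ lam ∧
        |Ffun a ρ ℓ lam|
          ≤ C * ((ℓ:ℝ)^3 / ((lam^2 + a^2) * lam)) * (lam*ρ*Real.exp 1/(2*ℓ))^(2*ℓ) := by
  have hπ := Real.pi_pos
  set M := Real.sqrt (lam₀^2+a₀^2) * ρ₀ with hM_def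
  have hM0 : 0 < M := mul_pos (Real.sqrt_pos.mpr (by positivity)) hρ₀
  set K : ℝ := max 1 (M/2) with hK_def
  have hK1 : (1:ℝ) ≤ K := le_max_left _ _
  have hMK : M/2 ≤ K := le_max_right _ _
  have hC0 : (0:ℝ) < 11+3*K+3*|eulerGamma| := by positivity
  -- eventual smallness
  have hev : ∀ᶠ n : ℕ in Filter.atTop,
      (8*K^2)^n / (n.factorial : ℝ) < 1/(2*(11+3*K+3*|eulerGamma|)) := by
    apply Filter.Tendsto.eventually_lt_const (by positivity)
    exact FloorSemiring.tendsto_pow_div_factorial_atTop (8*K^2)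
  obtain ⟨N, hN⟩ := Filter.eventually_atTop.mp hev
  have hsmall : ∀ m : ℕ, N ≤ m → 1 ≤ m →
      (11+3*K+3*|eulerGamma|) * (m:ℝ)^3 * K^(2*m) ≤ ((m.factorial:ℝ))^2/2 := by
    intro m hm hm1
    have hfac1 : (1:ℝ) ≤ (m.factorial:ℝ) := by
      exact_mod_cast Nat.one_le_iff_ne_zero.mpr (Nat.factorial_ne_zero _)
    have h1 : (m:ℝ)^3 ≤ (8:ℝ)^m := by
      have h2m : (m:ℝ) ≤ (2:ℝ)^m := by exact_mod_cast (Nat.lt_two_pow_self (n := m)).le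
      calc (m:ℝ)^3 ≤ ((2:ℝ)^m)^3 := by
            apply pow_le_pow_left₀ (Nat.cast_nonneg m) h2m
        _ = (8:ℝ)^m := by
            rw [← pow_mul, show (8:ℝ) = 2^3 by norm_num, ← pow_mul, mul_comm]
    have hq := (hN m hm).le
    have h3 : (11+3*K+3*|eulerGamma|) * (8*K^2)^m ≤ (m.factorial:ℝ)/2 := by
      rw [div_le_div_iff₀ (by positivity) (by positivity)] at hq
      rw [le_div_iff₀ (by norm_num : (0:ℝ) < 2)]
      linarith
    calc (11+3*K+3*|eulerGamma|) * (m:ℝ)^3 * K^(2*m)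
        ≤ (11+3*K+3*|eulerGamma|) * ((8:ℝ)^m * (K^2)^m) := by
          rw [pow_mul, mul_assoc]
          gcongr
      _ = (11+3*K+3*|eulerGamma|) * (8*K^2)^m := by rw [mul_pow]
      _ ≤ (m.factorial:ℝ)/2 := h3
      _ ≤ ((m.factorial:ℝ))^2/2 := by nlinarith [hfac1]
  set ℓ₀ : ℕ := max (N+2) (⌈3*(M/2)^2 + 6*M^2⌉₊ + 3) with hℓ₀def
  have hℓ₀3 : 3 ≤ ℓ₀ := le_trans (by omega) (le_max_right _ _)
  refine ⟨ℓ₀, by omega, 288*a₀^2*(M/2)^2+1, by positivity, ?_⟩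
  intro ℓ hℓ lam a ρ hlam hlamle ha hale hρ hρle
  have hℓ3 : 3 ≤ ℓ := le_trans hℓ₀3 hℓ
  have hℓN : N + 2 ≤ ℓ := le_trans (le_max_left _ _) hℓ
  have hℓceil : ⌈3*(M/2)^2 + 6*M^2⌉₊ + 3 ≤ ℓ := le_trans (le_max_right _ _) hℓ
  have hMl : 3*(M/2)^2 + 6*M^2 ≤ (ℓ:ℝ) - 3 := by
    have h1 := Nat.le_ceil (3*(M/2)^2 + 6*M^2)
    have h2 : (⌈3*(M/2)^2 + 6*M^2⌉₊ : ℝ) + 3 ≤ (ℓ:ℝ) := by exact_mod_cast hℓceil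
    linarith
  have hℓR : (3:ℝ) ≤ (ℓ:ℝ) := by exact_mod_cast hℓ3
  -- per-instance setup
  set μ := Real.sqrt (lam^2+a^2) with hμ_def
  have hμ0 : 0 < μ := Real.sqrt_pos.mpr (by positivity)
  have hμsq : μ^2 = lam^2+a^2 := Real.sq_sqrt (by positivity)
  have hlamμ : lam ≤ μ := by
    calc lam = Real.sqrt (lam^2) := (Real.sqrt_sq hlam.le).symm
      _ ≤ Real.sqrt (lam^2+a^2) := Real.sqrt_le_sqrt (le_add_of_nonneg_right (sq_nonneg a))
      _ = μ := hμ_def.symm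
  set x := lam*ρ with hx_def
  set y := μ*ρ with hy_def
  have hx0 : 0 < x := by positivity
  have hy0 : 0 < y := by positivity
  have hlam0M : lam₀ ≤ Real.sqrt (lam₀^2+a₀^2) := by
    calc lam₀ = Real.sqrt (lam₀^2) := (Real.sqrt_sq hlam₀.le).symm
      _ ≤ Real.sqrt (lam₀^2+a₀^2) := Real.sqrt_le_sqrt (le_add_of_nonneg_right (sq_nonneg a₀))
  have hμM : μ ≤ Real.sqrt (lam₀^2+a₀^2) := by
    rw [hμ_def]
    apply Real.sqrt_le_sqrt
    have h1 : lam^2 ≤ lam₀^2 := pow_le_pow_left₀ hlam.le hlamle 2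
    have h2 : a^2 ≤ a₀^2 := pow_le_pow_left₀ ha.le hale 2
    linarith
  have hxM : x ≤ M := by
    rw [hx_def, hM_def]
    exact mul_le_mul (le_trans hlamle hlam0M) hρle hρ.le (Real.sqrt_nonneg _)
  have hyM : y ≤ M := by
    rw [hy_def, hM_def]
    exact mul_le_mul hμM hρle hρ.le (Real.sqrt_nonneg _)
  have cℓ1 : ((ℓ-1:ℕ):ℝ) = (ℓ:ℝ)-1 := by
    rw [Nat.cast_sub (by omega)]; norm_num
  have cℓp : ((ℓ+1:ℕ):ℝ) = (ℓ:ℝ)+1 := by push_cast; ring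
  set f1 := ((ℓ-1).factorial : ℝ) with hf1_def
  set f0 := (ℓ.factorial : ℝ) with hf0_def
  set fp := ((ℓ+1).factorial : ℝ) with hfp_def
  set f2 := ((ℓ-1-1).factorial : ℝ) with hf2_def
  have hf1p : 0 < f1 := by positivity
  have hf0p : 0 < f0 := by positivity
  have hfpp : 0 < fp := by positivity
  have hf2p : 0 < f2 := by positivity
  have e_f0 : f0 = (ℓ:ℝ) * f1 := by
    rw [hf0_def, hf1_def, ← Nat.mul_factorial_pred (show ℓ ≠ 0 by omega)]
    push_cast; ring
  have e_f1 : f1 = ((ℓ:ℝ)-1) * f2 := by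
    rw [hf1_def, hf2_def, ← Nat.mul_factorial_pred (show ℓ-1 ≠ 0 by omega), ← cℓ1]
    push_cast; ring
  have e_fp : fp = ((ℓ:ℝ)+1) * f0 := by
    rw [hfp_def, hf0_def, Nat.factorial_succ]
    push_cast; ring
  have e_f02 : f0 = (ℓ:ℝ)*((ℓ:ℝ)-1)*f2 := by rw [e_f0, e_f1]; ring
  -- size conditions
  have hx2M : x/2 ≤ M/2 := by linarith
  have hy2M : y/2 ≤ M/2 := by linarith
  have hx2K : x/2 ≤ K := le_trans hx2M hMK
  have hxsq : (x/2)^2 ≤ (M/2)^2 := pow_le_pow_left₀ (by positivity) hx2M 2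
  have hysq : (y/2)^2 ≤ (M/2)^2 := pow_le_pow_left₀ (by positivity) hy2M 2
  have hM6 : 0 ≤ 6*M^2 := by positivity
  have hM3 : 0 ≤ 3*(M/2)^2 := by positivity
  have htJ1 : 3*(y/2)^2 ≤ ((ℓ-1:ℕ):ℝ)+1 := by rw [cℓ1]; linarith
  have htJ0 : 3*(y/2)^2 ≤ (ℓ:ℝ)+1 := by linarith
  have htJp : 3*(y/2)^2 ≤ ((ℓ+1:ℕ):ℝ)+1 := by rw [cℓp]; linarith
  have htY0 : 3*(x/2)^2 ≤ (ℓ:ℝ)-1 := by linarith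
  have htY1 : 3*(x/2)^2 ≤ ((ℓ-1:ℕ):ℝ)-1 := by rw [cℓ1]; linarith
  -- bessel bounds
  have hJ1l := Jr_lower (ℓ-1) y hy0.le htJ1
  have hJ1u := Jr_upper (ℓ-1) y hy0.le htJ1
  have hJ0l := Jr_lower ℓ y hy0.le htJ0
  have hJ0u := Jr_upper ℓ y hy0.le htJ0
  have hJpl := Jr_lower (ℓ+1) y hy0.le htJp
  have hJpu := Jr_upper (ℓ+1) y hy0.le htJp
  have hY0 := Ybound ℓ x K (by omega) hx0 hK1 hx2K htY0 (hsmall ℓ (by omega) (by omega))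
  have hY1 := Ybound (ℓ-1) x K (by omega) hx0 hK1 hx2K htY1 (hsmall (ℓ-1) (by omega) (by omega))
  -- structural equations
  have hD_eq : Dfun a ρ ℓ lam
      = (μ * besselJr (ℓ-1) y * besselJr ℓ x - lam * besselJr ℓ y * besselJr (ℓ-1) x)^2
        + (μ * besselJr (ℓ-1) y * besselYr ℓ x - lam * besselJr ℓ y * besselYr (ℓ-1) x)^2 := by
    simp only [Dfun, hμ_def, hx_def, hy_def]
  have hF_eq : Ffun a ρ ℓ lam
      = (2*a^2/(Real.pi^2*lam)) * besselJr (ℓ-1) y * besselJr (ℓ+1) y / Dfun a ρ ℓ lam := by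
    simp only [Ffun, hμ_def, hx_def, hy_def]
  -- abstract the bessel values
  obtain ⟨J1, hJ1e⟩ : ∃ t, besselJr (ℓ-1) y = t := ⟨_, rfl⟩
  obtain ⟨J0, hJ0e⟩ : ∃ t, besselJr ℓ y = t := ⟨_, rfl⟩
  obtain ⟨Jp, hJpe⟩ : ∃ t, besselJr (ℓ+1) y = t := ⟨_, rfl⟩
  obtain ⟨Y0, hY0e⟩ : ∃ t, besselYr ℓ x = t := ⟨_, rfl⟩
  obtain ⟨Y1, hY1e⟩ : ∃ t, besselYr (ℓ-1) x = t := ⟨_, rfl⟩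
  rw [hJ1e] at hJ1l hJ1u hD_eq hF_eq
  rw [hJ0e] at hJ0l hJ0u hD_eq
  rw [hJpe] at hJpl hJpu hF_eq
  rw [hY0e] at hY0 hD_eq
  rw [hY1e] at hY1 hD_eq
  have hJ1pos : 0 < J1 := lt_of_lt_of_le (by positivity) hJ1l
  have hJ0pos : 0 < J0 := lt_of_lt_of_le (by positivity) hJ0l
  have hJppos : 0 < Jp := lt_of_lt_of_le (by positivity) hJpl
  have hZ0pos : 0 < -Y0 := lt_of_lt_of_le (by positivity) hY0.1
  have hZ1pos : 0 < -Y1 := lt_of_lt_of_le (by positivity) hY1.1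
  -- power identities
  have hx2ne : (x/2 : ℝ) ≠ 0 := by positivity
  have epowx : (x/2)^ℓ = (x/2)^(ℓ-1)*(x/2) := by
    rw [← pow_succ]; congr 1; omega
  have epowy : (y/2)^ℓ = (y/2)^(ℓ-1)*(y/2) := by
    rw [← pow_succ]; congr 1; omega
  have epowyp : (y/2)^(ℓ+1) = (y/2)^(ℓ-1)*(y/2)^2 := by
    rw [← pow_add]; congr 1; omega
  have epow2 : (x/2)^(2*ℓ) = ((x/2)^ℓ)^2 := by
    rw [← pow_mul, mul_comm]
  have einv : ((x/2)^(ℓ-1))⁻¹ = (x/2)*((x/2)^ℓ)⁻¹ := by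
    rw [epowx, mul_inv]
    field_simp
  -- lower bound for the Y-bracket
  have s1 : μ*((1/2)*((y/2)^(ℓ-1)/f1)) * ((1/(2*Real.pi))*(f1*((x/2)^ℓ)⁻¹)) ≤ (μ*J1)*(-Y0) :=
    mul_le_mul (mul_le_mul_of_nonneg_left hJ1l hμ0.le) hY0.1 (by positivity)
      (by positivity)
  have e1 : μ*((1/2)*((y/2)^(ℓ-1)/f1)) * ((1/(2*Real.pi))*(f1*((x/2)^ℓ)⁻¹))
      = (μ/(4*Real.pi))*((y/2)^(ℓ-1)*((x/2)^ℓ)⁻¹) := by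
    field_simp
    ring
  have s2 : (lam*J0)*(-Y1) ≤ lam*((3/2)*((y/2)^ℓ/f0)) * ((2/Real.pi)*(f2*((x/2)^(ℓ-1))⁻¹)) :=
    mul_le_mul (mul_le_mul_of_nonneg_left hJ0u hlam.le) hY1.2 hZ1pos.le (by positivity)
  have e2 : lam*((3/2)*((y/2)^ℓ/f0)) * ((2/Real.pi)*(f2*((x/2)^(ℓ-1))⁻¹))
      = (3*lam*(y/2)*(x/2))/(Real.pi*((ℓ:ℝ)*((ℓ:ℝ)-1))) * ((y/2)^(ℓ-1)*((x/2)^ℓ)⁻¹) := by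
    rw [epowy, einv, e_f02]
    have hℓ1 : ((ℓ:ℝ)-1) ≠ 0 := by intro h; linarith
    have hℓ0 : ((ℓ:ℝ)) ≠ 0 := by positivity
    field_simp
  have hℓℓ1 : (0:ℝ) < (ℓ:ℝ)*((ℓ:ℝ)-1) := mul_pos (by linarith) (by linarith)
  have hcoef : (3*lam*(y/2)*(x/2))/(Real.pi*((ℓ:ℝ)*((ℓ:ℝ)-1))) ≤ (μ/(8*Real.pi)) := by
    rw [div_le_div_iff₀ (mul_pos hπ hℓℓ1) (by positivity)]
    have p1 : (y/2)*(x/2) ≤ (M/2)^2 := by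
      calc (y/2)*(x/2) ≤ (M/2)*(M/2) :=
            mul_le_mul hy2M hx2M (by positivity) (by positivity)
        _ = (M/2)^2 := (sq (M/2)).symm
    have h24 : 24*((y/2)*(x/2)) ≤ (ℓ:ℝ)*((ℓ:ℝ)-1) := by
      have q3 : (ℓ:ℝ)-3 ≤ (ℓ:ℝ)*((ℓ:ℝ)-1) := by
        have := sq_nonneg ((ℓ:ℝ)-1)
        linarith [sq_abs ((ℓ:ℝ)-1)] <;> skip
      linarith [p1, hMl, hM3]
    have hq : 24*(lam*((y/2)*(x/2))) ≤ μ*((ℓ:ℝ)*((ℓ:ℝ)-1)) := by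
      have t1 : lam*(24*((y/2)*(x/2))) ≤ lam*((ℓ:ℝ)*((ℓ:ℝ)-1)) :=
        mul_le_mul_of_nonneg_left h24 hlam.le
      have t2 : lam*((ℓ:ℝ)*((ℓ:ℝ)-1)) ≤ μ*((ℓ:ℝ)*((ℓ:ℝ)-1)) :=
        mul_le_mul_of_nonneg_right hlamμ hℓℓ1.le
      linarith
    have t3 : Real.pi*(24*(lam*((y/2)*(x/2)))) ≤ Real.pi*(μ*((ℓ:ℝ)*((ℓ:ℝ)-1))) :=
      mul_le_mul_of_nonneg_left hq hπ.le
    linarith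
  have s3 : lam*((3/2)*((y/2)^ℓ/f0)) * ((2/Real.pi)*(f2*((x/2)^(ℓ-1))⁻¹))
      ≤ (μ/(8*Real.pi))*((y/2)^(ℓ-1)*((x/2)^ℓ)⁻¹) := by
    rw [e2]
    exact mul_le_mul_of_nonneg_right hcoef (by positivity)
  have hG : (μ/(8*Real.pi))*((y/2)^(ℓ-1)*((x/2)^ℓ)⁻¹) ≤ (μ*J1)*(-Y0) - (lam*J0)*(-Y1) := by
    have ee : (μ/(4*Real.pi))*((y/2)^(ℓ-1)*((x/2)^ℓ)⁻¹)
        - (μ/(8*Real.pi))*((y/2)^(ℓ-1)*((x/2)^ℓ)⁻¹)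
        = (μ/(8*Real.pi))*((y/2)^(ℓ-1)*((x/2)^ℓ)⁻¹) := by ring
    rw [e1] at s1
    linarith
  have hLBpos : 0 < (μ/(8*Real.pi))*((y/2)^(ℓ-1)*((x/2)^ℓ)⁻¹) := by positivity
  have hDlow : ((μ/(8*Real.pi))*((y/2)^(ℓ-1)*((x/2)^ℓ)⁻¹))^2 ≤ Dfun a ρ ℓ lam := by
    rw [hD_eq]
    have hbr : (μ * J1 * Y0 - lam * J0 * Y1)^2 = ((μ*J1)*(-Y0) - (lam*J0)*(-Y1))^2 := by ring
    have h1 : ((μ/(8*Real.pi))*((y/2)^(ℓ-1)*((x/2)^ℓ)⁻¹))^2 ≤ ((μ*J1)*(-Y0) - (lam*J0)*(-Y1))^2 :=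
      pow_le_pow_left₀ hLBpos.le hG 2
    rw [hbr]
    linarith [sq_nonneg (μ * J1 * besselJr ℓ x - lam * J0 * besselJr (ℓ-1) x)]
  have hDpos : 0 < Dfun a ρ ℓ lam := lt_of_lt_of_le (by positivity) hDlow
  refine ⟨hDpos, ?_⟩
  -- upper bound for F
  have hFnn : 0 ≤ Ffun a ρ ℓ lam := by
    rw [hF_eq]
    apply div_nonneg _ hDpos.le
    positivity
  rw [abs_of_nonneg hFnn, hF_eq]
  have hnum : (2*a^2/(Real.pi^2*lam)) * J1 * Jp
      ≤ (2*a^2/(Real.pi^2*lam)) * ((3/2)*((y/2)^(ℓ-1)/f1)) * ((3/2)*((y/2)^(ℓ+1)/fp)) := by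
    apply mul_le_mul (mul_le_mul_of_nonneg_left hJ1u (by positivity)) hJpu hJppos.le
    positivity
  have hFle : (2*a^2/(Real.pi^2*lam)) * J1 * Jp / Dfun a ρ ℓ lam
      ≤ ((2*a^2/(Real.pi^2*lam)) * ((3/2)*((y/2)^(ℓ-1)/f1)) * ((3/2)*((y/2)^(ℓ+1)/fp)))
        / ((μ/(8*Real.pi))*((y/2)^(ℓ-1)*((x/2)^ℓ)⁻¹))^2 :=
    div_le_div₀ (by positivity) hnum (by positivity) hDlow
  have eNU : ((2*a^2/(Real.pi^2*lam)) * ((3/2)*((y/2)^(ℓ-1)/f1)) * ((3/2)*((y/2)^(ℓ+1)/fp)))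
        / ((μ/(8*Real.pi))*((y/2)^(ℓ-1)*((x/2)^ℓ)⁻¹))^2
      = 288*a^2*(y/2)^2*((x/2)^(2*ℓ)/(lam*μ^2*(f1*fp))) := by
    rw [epowyp, epow2]
    have hyp1 : (0:ℝ) < (y/2)^(ℓ-1) := by positivity
    have hxp1 : (0:ℝ) < (x/2)^ℓ := by positivity
    field_simp
    ring
  -- final comparison
  have key : (ℓ:ℝ)^(2*ℓ) ≤ (ℓ:ℝ)^3 * ((Real.exp 1)^(2*ℓ) * (f1*fp)) := by
    have h := pow_self_le ℓ
    have hsq : ((ℓ:ℝ)^ℓ)^2 ≤ ((Real.exp 1)^ℓ * f0)^2 :=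
      pow_le_pow_left₀ (by positivity) h 2
    have e3 : ((ℓ:ℝ)^ℓ)^2 = (ℓ:ℝ)^(2*ℓ) := by rw [← pow_mul, mul_comm]
    have e4 : ((Real.exp 1)^ℓ * f0)^2 = (Real.exp 1)^(2*ℓ) * (f0*f0) := by
      rw [mul_pow, ← pow_mul, mul_comm ℓ 2]; ring
    have hf0fp : f0*f0 ≤ (ℓ:ℝ)^3 * (f1*fp) := by
      have hℓ1R : (1:ℝ) ≤ (ℓ:ℝ) := by linarith
      have hffp : f0 ≤ fp := by
        rw [e_fp]
        calc f0 = 1*f0 := (one_mul f0).symm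
          _ ≤ ((ℓ:ℝ)+1)*f0 := mul_le_mul_of_nonneg_right (by linarith) hf0p.le
      have hℓℓ3 : (ℓ:ℝ) ≤ (ℓ:ℝ)^3 := by
        calc (ℓ:ℝ) = (ℓ:ℝ)^1 := (pow_one _).symm
          _ ≤ (ℓ:ℝ)^3 := pow_le_pow_right₀ hℓ1R (by omega)
      calc f0*f0 = (ℓ:ℝ)*f1*f0 := by rw [e_f0]
        _ ≤ (ℓ:ℝ)*f1*fp := mul_le_mul_of_nonneg_left hffp (by positivity)
        _ = (ℓ:ℝ)*(f1*fp) := by ring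
        _ ≤ (ℓ:ℝ)^3*(f1*fp) := mul_le_mul_of_nonneg_right hℓℓ3 (by positivity)
    have hexp2 : (0:ℝ) < (Real.exp 1)^(2*ℓ) := by positivity
    calc (ℓ:ℝ)^(2*ℓ) = ((ℓ:ℝ)^ℓ)^2 := e3.symm
      _ ≤ ((Real.exp 1)^ℓ * f0)^2 := hsq
      _ = (Real.exp 1)^(2*ℓ) * (f0*f0) := e4
      _ ≤ (Real.exp 1)^(2*ℓ) * ((ℓ:ℝ)^3 * (f1*fp)) :=
        mul_le_mul_of_nonneg_left hf0fp (by positivity)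
      _ = (ℓ:ℝ)^3 * ((Real.exp 1)^(2*ℓ) * (f1*fp)) := by ring
  have hyC : 288*a^2*(y/2)^2 ≤ 288*a₀^2*(M/2)^2+1 := by
    have h1 : a^2 ≤ a₀^2 := pow_le_pow_left₀ ha.le hale 2
    have h2 : a^2*(y/2)^2 ≤ a₀^2*(M/2)^2 :=
      mul_le_mul h1 hysq (by positivity) (by positivity)
    linarith
  have hfinal : 288*a^2*(y/2)^2*((x/2)^(2*ℓ)/(lam*μ^2*(f1*fp)))
      ≤ (288*a₀^2*(M/2)^2+1) * ((ℓ:ℝ)^3 / ((lam^2 + a^2) * lam)) * ((x/2)^(2*ℓ) * ((Real.exp 1)^(2*ℓ) * (((ℓ:ℝ))^(2*ℓ))⁻¹)) := by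
    rw [← hμsq]
    have hW : (0:ℝ) < (x/2)^(2*ℓ)/(μ^2*lam) := by positivity
    have eL : 288*a^2*(y/2)^2*((x/2)^(2*ℓ)/(lam*μ^2*(f1*fp)))
        = (288*a^2*(y/2)^2/(f1*fp)) * ((x/2)^(2*ℓ)/(μ^2*lam)) := by
      field_simp
    have eR : (288*a₀^2*(M/2)^2+1) * ((ℓ:ℝ)^3 / (μ^2 * lam)) * ((x/2)^(2*ℓ) * ((Real.exp 1)^(2*ℓ) * (((ℓ:ℝ))^(2*ℓ))⁻¹))
        = ((288*a₀^2*(M/2)^2+1) * ((ℓ:ℝ)^3 * ((Real.exp 1)^(2*ℓ) / ((ℓ:ℝ))^(2*ℓ)))) * ((x/2)^(2*ℓ)/(μ^2*lam)) := by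
      field_simp
    rw [eL, eR]
    apply mul_le_mul_of_nonneg_right _ hW.le
    have hcross : 288*a^2*(y/2)^2 * ((ℓ:ℝ))^(2*ℓ)
        ≤ ((288*a₀^2*(M/2)^2+1) * ((ℓ:ℝ)^3 * (Real.exp 1)^(2*ℓ))) * (f1*fp) := by
      calc 288*a^2*(y/2)^2 * ((ℓ:ℝ))^(2*ℓ)
          ≤ (288*a₀^2*(M/2)^2+1) * ((ℓ:ℝ)^3 * ((Real.exp 1)^(2*ℓ) * (f1*fp))) := by
            apply mul_le_mul hyC key (by positivity) (by positivity)
        _ = ((288*a₀^2*(M/2)^2+1) * ((ℓ:ℝ)^3 * (Real.exp 1)^(2*ℓ))) * (f1*fp) := by ring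
    have eR2 : (288*a₀^2*(M/2)^2+1) * ((ℓ:ℝ)^3 * ((Real.exp 1)^(2*ℓ) / ((ℓ:ℝ))^(2*ℓ)))
        = ((288*a₀^2*(M/2)^2+1) * ((ℓ:ℝ)^3 * (Real.exp 1)^(2*ℓ))) / ((ℓ:ℝ))^(2*ℓ) := by ring
    rw [eR2, div_le_div_iff₀ (by positivity) (by positivity)]
    exact hcross
  have etarget : (x*Real.exp 1/(2*(ℓ:ℝ)))^(2*ℓ)
      = (x/2)^(2*ℓ) * ((Real.exp 1)^(2*ℓ) * (((ℓ:ℝ))^(2*ℓ))⁻¹) := by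
    have hℓ0 : ((ℓ:ℝ)) ≠ 0 := by positivity
    have e5 : x*Real.exp 1/(2*(ℓ:ℝ)) = (x/2) * (Real.exp 1 / (ℓ:ℝ)) := by
      field_simp
    rw [e5, mul_pow, div_pow]
    ring
  calc (2*a^2/(Real.pi^2*lam)) * J1 * Jp / Dfun a ρ ℓ lam
      ≤ ((2*a^2/(Real.pi^2*lam)) * ((3/2)*((y/2)^(ℓ-1)/f1)) * ((3/2)*((y/2)^(ℓ+1)/fp)))
        / ((μ/(8*Real.pi))*((y/2)^(ℓ-1)*((x/2)^ℓ)⁻¹))^2 := hFle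
    _ = 288*a^2*(y/2)^2*((x/2)^(2*ℓ)/(lam*μ^2*(f1*fp))) := eNU
    _ ≤ (288*a₀^2*(M/2)^2+1) * ((ℓ:ℝ)^3 / ((lam^2 + a^2) * lam)) * ((x/2)^(2*ℓ) * ((Real.exp 1)^(2*ℓ) * (((ℓ:ℝ))^(2*ℓ))⁻¹)) := hfinal
    _ = (288*a₀^2*(M/2)^2+1) * ((ℓ:ℝ)^3 / ((lam^2 + a^2) * lam)) * (x*Real.exp 1/(2*(ℓ:ℝ)))^(2*ℓ) := by rw [etarget]
end

section
/- Let ℓ ≥ 1 be an integer and a, ρ > 0 with J_{ℓ−1}(aρ) = 0 and J_ℓ(aρ) ≠ 0. For real λ > 0 set μ(λ) = √(λ² + a²) and A_ℓ(λ) = −(λ/μ(λ))·J_ℓ(μ(λ)ρ)/J_ℓ′(μ(λ)ρ) (which is defined for all sufficiently small λ > 0, since J_ℓ′(aρ) = −(ℓ/(aρ))·J_ℓ(aρ) ≠ 0). Then, as λ ↓ 0, A_ℓ(λ) = λρ/ℓ − (λρ)³/(2ℓ²) + O(λ⁵). -/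
open scoped Real Topology
open Filter Asymptotics

noncomputable def bc (m k : ℕ) : ℝ :=
  (-1 : ℝ)^k / ((Nat.factorial k : ℝ) * (Nat.factorial (k + m) : ℝ))

noncomputable def Ec (m : ℕ) (u : ℝ) : ℝ := ∑' k : ℕ, bc m k * u^k

lemma abs_bc_le (m k : ℕ) : |bc m k| ≤ 1 / (Nat.factorial k : ℝ) := by
  have h1 : (0:ℝ) < (Nat.factorial k : ℝ) := by exact_mod_cast Nat.factorial_pos k
  have h2 : (1:ℝ) ≤ (Nat.factorial (k+m) : ℝ) := by exact_mod_cast Nat.one_le_iff_ne_zero.mpr (Nat.factorial_ne_zero _)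
  have : |bc m k| = 1 / ((Nat.factorial k : ℝ) * (Nat.factorial (k + m) : ℝ)) := by
    rw [bc, abs_div, abs_pow, abs_neg, abs_one, one_pow, abs_of_pos (by positivity)]
  rw [this]
  rw [div_le_div_iff₀ (by positivity) h1]
  nlinarith
lemma summable_Ec (m : ℕ) (u : ℝ) : Summable (fun k : ℕ => bc m k * u^k) := by
  apply Summable.of_norm
  apply Summable.of_nonneg_of_le (fun k => norm_nonneg _) (fun k => ?_)
    ((Real.summable_pow_div_factorial |u|))
  rw [norm_mul, norm_pow, Real.norm_eq_abs, Real.norm_eq_abs]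
  calc |bc m k| * |u|^k ≤ (1/(Nat.factorial k:ℝ)) * |u|^k :=
        mul_le_mul_of_nonneg_right (abs_bc_le m k) (pow_nonneg (abs_nonneg u) k)
    _ = |u|^k / (Nat.factorial k:ℝ) := by ring

lemma summable_ub (R : ℝ) : Summable (fun k : ℕ => (k : ℝ) * R^(k-1) / (Nat.factorial k : ℝ)) := by
  rw [← summable_nat_add_iff 1]
  have : (fun k : ℕ => ((k+1 : ℕ) : ℝ) * R^((k+1)-1) / (Nat.factorial (k+1) : ℝ))
      = fun k : ℕ => R^k / (Nat.factorial k : ℝ) := by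
    funext k
    have hk : ((Nat.factorial k : ℝ)) ≠ 0 := by exact_mod_cast Nat.factorial_ne_zero k
    rw [Nat.add_sub_cancel, Nat.factorial_succ]
    push_cast
    field_simp
  rw [this]
  exact Real.summable_pow_div_factorial R

lemma summable_deriv_term (m : ℕ) (u : ℝ) :
    Summable (fun k : ℕ => bc m k * ((k:ℝ) * u^(k-1))) := by
  apply Summable.of_norm
  apply Summable.of_nonneg_of_le (fun k => norm_nonneg _) (fun k => ?_) (summable_ub |u|)
  rw [norm_mul, norm_mul, Real.norm_eq_abs, Real.norm_eq_abs, Real.norm_eq_abs,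
    abs_pow, Nat.abs_cast]
  calc |bc m k| * ((k:ℝ) * |u|^(k-1)) ≤ (1/(Nat.factorial k:ℝ)) * ((k:ℝ) * |u|^(k-1)) :=
        mul_le_mul_of_nonneg_right (abs_bc_le m k) (by positivity)
    _ = (k:ℝ) * |u|^(k-1) / (Nat.factorial k:ℝ) := by ring

lemma bc_succ (m k : ℕ) : bc m (k+1) * ((k:ℝ)+1) = -(bc (m+1) k) := by
  unfold bc
  have h : k + 1 + m = k + (m+1) := by omega
  rw [h, Nat.factorial_succ]
  have h1 : ((Nat.factorial k : ℝ)) ≠ 0 := by exact_mod_cast Nat.factorial_ne_zero k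
  have h2 : ((Nat.factorial (k+(m+1)) : ℝ)) ≠ 0 := by exact_mod_cast Nat.factorial_ne_zero _
  push_cast
  field_simp
  ring

lemma deriv_sum_eq (m : ℕ) (u : ℝ) :
    ∑' k : ℕ, bc m k * ((k:ℝ) * u^(k-1)) = -Ec (m+1) u := by
  rw [Summable.tsum_eq_zero_add (summable_deriv_term m u)]
  have h0 : bc m 0 * ((0:ℕ):ℝ) * u^(0-1) = 0 := by simp
  have h1 : ∀ k : ℕ, bc m (k+1) * (((k+1:ℕ):ℝ) * u^((k+1)-1)) = -(bc (m+1) k * u^k) := by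
    intro k
    rw [Nat.add_sub_cancel]
    push_cast
    linear_combination u^k * bc_succ m k
  rw [tsum_congr h1]
  simp [tsum_neg, Ec]

lemma hasDerivAt_Ec (m : ℕ) (u₀ : ℝ) : HasDerivAt (Ec m) (-Ec (m+1) u₀) u₀ := by
  have key : HasDerivAt (fun u => ∑' k : ℕ, bc m k * u^k)
      (∑' k : ℕ, bc m k * ((k:ℝ) * u₀^(k-1))) u₀ := by
    set R := |u₀| + 1 with hR
    have hR0 : 0 < R := by positivity
    apply hasDerivAt_tsum_of_isPreconnected
      (u := fun k : ℕ => (1/(Nat.factorial k:ℝ)) * ((k:ℝ) * R^(k-1)))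
      (g := fun (k : ℕ) (y : ℝ) => bc m k * y^k)
      (g' := fun (k : ℕ) (y : ℝ) => bc m k * ((k:ℝ) * y^(k-1)))
      (t := Metric.ball (0:ℝ) R) (y₀ := 0)
    · apply Summable.congr (summable_ub R)
      intro k; ring
    · exact Metric.isOpen_ball
    · exact (convex_ball (0:ℝ) R).isPreconnected
    · intro k y _
      exact ((hasDerivAt_pow k y).const_mul (bc m k))
    · intro k y hy
      have hyR : |y| ≤ R := by
        rw [Metric.mem_ball, Real.dist_eq, sub_zero] at hy
        exact hy.le
      rw [norm_mul, Real.norm_eq_abs, Real.norm_eq_abs]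
      have : |(k:ℝ) * y^(k-1)| ≤ (k:ℝ) * R^(k-1) := by
        rw [abs_mul, Nat.abs_cast, abs_pow]
        have : |y|^(k-1) ≤ R^(k-1) := pow_le_pow_left₀ (abs_nonneg y) hyR _
        nlinarith [Nat.cast_nonneg (α := ℝ) k, abs_nonneg y, pow_nonneg (abs_nonneg y) (k-1)]
      exact mul_le_mul (abs_bc_le m k) this (abs_nonneg _) (by positivity)
    · exact Metric.mem_ball_self hR0
    · exact summable_Ec m 0
    · rw [Metric.mem_ball, Real.dist_eq, sub_zero]; linarith [le_abs_self u₀, neg_abs_le u₀]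
  rw [deriv_sum_eq] at key
  exact key

lemma Ec_rec (m : ℕ) (u : ℝ) : Ec m u + u * Ec (m+2) u = ((m:ℝ)+1) * Ec (m+1) u := by
  have hsum2 : Summable (fun k : ℕ => bc (m+2) k * u^(k+1)) := by
    have := (summable_Ec (m+2) u).mul_left u
    apply this.congr
    intro k; ring
  have hu : u * Ec (m+2) u = ∑' k : ℕ, bc (m+2) k * u^(k+1) := by
    rw [Ec, ← tsum_mul_left]
    exact tsum_congr fun k => by ring
  set h : ℕ → ℝ := fun k => if k = 0 then 0 else bc (m+2) (k-1) * u^k with hh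
  have hsumh : Summable h := by
    rw [← summable_nat_add_iff 1]
    apply hsum2.congr
    intro k
    simp [hh]
  have hth : ∑' k, h k = ∑' k : ℕ, bc (m+2) k * u^(k+1) := by
    rw [Summable.tsum_eq_zero_add hsumh]
    simp [hh]
  have key : ∀ k : ℕ, bc m k * u^k + h k = ((m:ℝ)+1) * (bc (m+1) k * u^k) := by
    intro k
    cases k with
    | zero =>
      simp only [hh, if_pos rfl, pow_zero, mul_one, add_zero]
      unfold bc
      simp only [pow_zero, Nat.factorial_zero, Nat.zero_add, Nat.cast_one, one_mul]
      rw [Nat.factorial_succ]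
      have h1 : ((Nat.factorial m : ℝ)) ≠ 0 := by exact_mod_cast Nat.factorial_ne_zero m
      push_cast
      field_simp
    | succ k =>
      simp only [hh, if_neg (Nat.succ_ne_zero k), Nat.add_sub_cancel]
      unfold bc
      have e1 : k + 1 + m = k + m + 1 := by omega
      have e2 : k + (m+2) = k + m + 2 := by omega
      have e3 : k + 1 + (m+1) = k + m + 2 := by omega
      rw [e1, e2, e3, Nat.factorial_succ (k+m+1), Nat.factorial_succ (k+m), Nat.factorial_succ k]
      have h1 : ((Nat.factorial k : ℝ)) ≠ 0 := by exact_mod_cast Nat.factorial_ne_zero k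
      have h2 : ((Nat.factorial (k+m) : ℝ)) ≠ 0 := by exact_mod_cast Nat.factorial_ne_zero _
      push_cast
      rw [pow_succ]
      field_simp
      ring
  calc Ec m u + u * Ec (m+2) u = ∑' k, (bc m k * u^k + h k) := by
        rw [Ec, hu, ← hth, ← Summable.tsum_add (summable_Ec m u) hsumh]
    _ = ∑' k, ((m:ℝ)+1) * (bc (m+1) k * u^k) := tsum_congr key
    _ = ((m:ℝ)+1) * Ec (m+1) u := by rw [tsum_mul_left]; rfl

lemma besselJr_eq (m : ℕ) (x : ℝ) : besselJr m x = (x/2)^m * Ec m ((x/2)^2) := by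
  rw [besselJr, Ec, ← tsum_mul_left]
  apply tsum_congr
  intro k
  rw [bc, pow_add, pow_mul]
  ring

lemma hasDerivAt_besselJr (m : ℕ) {x : ℝ} (hx : x ≠ 0) :
    HasDerivAt (besselJr m) ((m:ℝ)/x * besselJr m x - besselJr (m+1) x) x := by
  have hhalf : HasDerivAt (fun y : ℝ => y/2) (1/2) x := (hasDerivAt_id x).div_const 2
  have hpow : HasDerivAt (fun y : ℝ => (y/2)^m) ((m:ℝ) * (x/2)^(m-1) * (1/2)) x :=
    (hasDerivAt_pow m (x/2)).comp x hhalf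
  have hsq : HasDerivAt (fun y : ℝ => (y/2)^2) (((2:ℕ):ℝ) * (x/2)^(2-1) * (1/2)) x :=
    by have := (hasDerivAt_pow 2 (x/2)).comp x hhalf; exact this
  have hEc : HasDerivAt (fun y : ℝ => Ec m ((y/2)^2))
      (-Ec (m+1) ((x/2)^2) * (((2:ℕ):ℝ) * (x/2)^(2-1) * (1/2))) x :=
    by have := (hasDerivAt_Ec m ((x/2)^2)).comp x hsq; exact this
  have key := hpow.mul hEc
  rw [show ((fun y : ℝ => (y/2)^m) * fun y : ℝ => Ec m ((y/2)^2)) = besselJr m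
      from (funext (besselJr_eq m)).symm] at key
  refine key.congr_deriv (Eq.symm ?_)
  rw [besselJr_eq m x, besselJr_eq (m+1) x]
  have h22 : (((2:ℕ):ℝ) * (x/2)^(2-1) * (1/2)) = x/2 := by push_cast; ring
  rw [h22]
  cases m with
  | zero => push_cast; simp; ring
  | succ n =>
    simp only [Nat.add_sub_cancel, Nat.cast_add, Nat.cast_one]
    rw [pow_succ (x/2) (n+1), pow_succ (x/2) n]
    field_simp
    ring

lemma bessel_rec (m : ℕ) {x : ℝ} (hx : x ≠ 0) :
    besselJr m x + besselJr (m+2) x = (2*((m:ℝ)+1)/x) * besselJr (m+1) x := by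
  rw [besselJr_eq m x, besselJr_eq (m+1) x, besselJr_eq (m+2) x]
  have h := Ec_rec m ((x/2)^2)
  calc (x/2)^m * Ec m ((x/2)^2) + (x/2)^(m+2) * Ec (m+2) ((x/2)^2)
      = (x/2)^m * (Ec m ((x/2)^2) + (x/2)^2 * Ec (m+2) ((x/2)^2)) := by ring
    _ = (x/2)^m * (((m:ℝ)+1) * Ec (m+1) ((x/2)^2)) := by rw [h]
    _ = (2*((m:ℝ)+1)/x) * ((x/2)^(m+1) * Ec (m+1) ((x/2)^2)) := by
        rw [pow_succ (x/2) m]; field_simp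

lemma hasDerivAt_besselJr' (m : ℕ) {x : ℝ} (hx : x ≠ 0) :
    HasDerivAt (besselJr (m+1)) (besselJr m x - (((m:ℝ)+1)/x) * besselJr (m+1) x) x := by
  have h := hasDerivAt_besselJr (m+1) hx
  convert h using 1
  have h2 := bessel_rec m hx
  push_cast at h2 ⊢
  have e : (2*((m:ℝ)+1)/x) * besselJr (m+1) x = 2*((((m:ℝ)+1)/x) * besselJr (m+1) x) := by ring
  rw [e] at h2
  linarith
lemma G0_inv (a ρ J G0 : ℝ) (ha : a ≠ 0) (hρ : ρ ≠ 0) (hJ : J ≠ 0) (m : ℕ)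
    (hG0 : G0 = -(((m:ℝ) + 1) * (a * ρ)⁻¹) * J) :
    G0⁻¹ = -(a*ρ) / ((((m:ℝ)+1))*J) := by
  have hm1 : ((m:ℝ)+1) ≠ 0 := by positivity
  apply inv_eq_of_mul_eq_one_right
  rw [hG0]
  field_simp

lemma G0_sq_inv (a ρ J G0 : ℝ) (ha : a ≠ 0) (hρ : ρ ≠ 0) (hJ : J ≠ 0) (m : ℕ)
    (hG0 : G0 = -(((m:ℝ) + 1) * (a * ρ)⁻¹) * J) :
    (G0^2)⁻¹ = (a*ρ)^2 / ((((m:ℝ)+1))^2*J^2) := by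
  have hm1 : ((m:ℝ)+1) ≠ 0 := by positivity
  apply inv_eq_of_mul_eq_one_right
  rw [hG0]
  field_simp

lemma phi0_value (a ρ J G0 : ℝ) (ha : a ≠ 0) (hρ : ρ ≠ 0) (hJ : J ≠ 0) (m : ℕ)
    (hG0 : G0 = -(((m:ℝ) + 1) * (a * ρ)⁻¹) * J) :
    -a⁻¹ * J * G0⁻¹ = ρ/((m:ℝ)+1) := by
  have hm1 : ((m:ℝ)+1) ≠ 0 := by positivity
  rw [G0_inv a ρ J G0 ha hρ hJ m hG0]
  field_simp

set_option maxHeartbeats 1000000 in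
lemma psi0_value (a ρ J G0 Gd0 : ℝ) (ha : a ≠ 0) (hρ : ρ ≠ 0) (hJ : J ≠ 0) (m : ℕ)
    (hG0 : G0 = -(((m:ℝ) + 1) * (a * ρ)⁻¹) * J)
    (hGd0 : Gd0 = -J + (((m:ℝ) + 1) + ((m:ℝ) + 1) ^ 2) * ((a * ρ) ^ 2)⁻¹ * J) :
    (-(-(1 / (2 * a)) / a ^ 2) * J + -a⁻¹ * (G0 * (1 / (2 * a) * ρ))) * G0⁻¹
      + -a⁻¹ * J * (-(Gd0 * (1 / (2 * a) * ρ)) / G0 ^ 2) = -(ρ^3)/(2*((m:ℝ)+1)^2) := by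
  have hm1 : ((m:ℝ)+1) ≠ 0 := by positivity
  rw [div_eq_mul_inv _ (G0^2), G0_inv a ρ J G0 ha hρ hJ m hG0,
    G0_sq_inv a ρ J G0 ha hρ hJ m hG0, hG0, hGd0]
  field_simp
  ring


set_option maxHeartbeats 2000000 in
/-- expansion of `A_ℓ(λ)` when `J_{ℓ-1}(aρ) = 0`. -/
theorem stmt_14 (ℓ : ℕ) (hℓ : 1 ≤ ℓ) (a ρ : ℝ) (ha : 0 < a) (hρ : 0 < ρ)
    (hJ1 : besselJr (ℓ-1) (a*ρ) = 0) (hJ2 : besselJr ℓ (a*ρ) ≠ 0) :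
    deriv (besselJr ℓ) (a*ρ) = -((ℓ:ℝ)/(a*ρ)) * besselJr ℓ (a*ρ) ∧
    (fun lam : ℝ =>
        (-(lam / Real.sqrt (lam^2+a^2)) * besselJr ℓ (Real.sqrt (lam^2+a^2) * ρ)
            / deriv (besselJr ℓ) (Real.sqrt (lam^2+a^2) * ρ))
          - (lam*ρ/(ℓ:ℝ) - (lam*ρ)^3/(2*(ℓ:ℝ)^2)))
      =O[nhdsWithin 0 (Set.Ioi 0)] (fun lam : ℝ => lam^5) := by
  obtain ⟨m, rfl⟩ : ∃ m, ℓ = m + 1 := ⟨ℓ - 1, (Nat.succ_pred_eq_of_pos hℓ).symm⟩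
  simp only [Nat.add_sub_cancel] at hJ1
  have hs0 : 0 < a * ρ := mul_pos ha hρ
  set G : ℝ → ℝ := fun x => besselJr m x - (((m:ℝ)+1) * x⁻¹) * besselJr (m+1) x with hGdef
  have hG : ∀ x : ℝ, x ≠ 0 → HasDerivAt (besselJr (m+1)) (G x) x := by
    intro x hx
    convert hasDerivAt_besselJr' m hx using 1
    simp only [hGdef]; ring
  have hderiv : ∀ x : ℝ, x ≠ 0 → deriv (besselJr (m+1)) x = G x := fun x hx => (hG x hx).deriv
  have hGs0 : G (a*ρ) = -((((m:ℝ)+1) * (a*ρ)⁻¹)) * besselJr (m+1) (a*ρ) := by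
    rw [hGdef]; simp only; rw [hJ1]; ring
  have hGs0ne : G (a*ρ) ≠ 0 := by
    rw [hGs0]
    apply mul_ne_zero _ hJ2
    rw [neg_ne_zero]
    exact mul_ne_zero (by positivity) (inv_ne_zero hs0.ne')
  constructor
  · rw [hderiv _ hs0.ne', hGs0]; push_cast; ring
  have hma : (-a^2 : ℝ) < 0 := by nlinarith
  set σ : ℝ → ℝ := fun t => Real.sqrt (t + a^2) with hσdef
  have hσpos : ∀ t : ℝ, -a^2 < t → 0 < σ t := by
    intro t ht; rw [hσdef]; exact Real.sqrt_pos.mpr (by linarith)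
  have hσd : ∀ t : ℝ, -a^2 < t → HasDerivAt σ (1/(2*σ t)) t := by
    intro t ht
    have h1 : HasDerivAt (fun u : ℝ => u + a^2) 1 t := (hasDerivAt_id t).add_const _
    have h2 := (Real.hasDerivAt_sqrt (show t + a^2 ≠ 0 by linarith)).comp t h1
    simp only [mul_one] at h2; exact h2
  have hσ0 : σ 0 = a := by rw [hσdef]; simp only; rw [zero_add, Real.sqrt_sq ha.le]
  set s : ℝ → ℝ := fun t => σ t * ρ with hsdef
  have hs0' : s 0 = a * ρ := by rw [hsdef]; simp only; rw [hσ0]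
  have hspos : ∀ t : ℝ, -a^2 < t → 0 < s t := fun t ht => mul_pos (hσpos t ht) hρ
  set Gd : ℝ → ℝ := fun x => ((m:ℝ)/x * besselJr m x - besselJr (m+1) x)
      - ((((m:ℝ)+1) * (-(x^2)⁻¹)) * besselJr (m+1) x + (((m:ℝ)+1) * x⁻¹) * G x) with hGddef
  have hGd : ∀ x : ℝ, x ≠ 0 → HasDerivAt G (Gd x) x := by
    intro x hx
    have h1 := hasDerivAt_besselJr m hx
    have hc : HasDerivAt (fun x : ℝ => ((m:ℝ)+1) * x⁻¹) (((m:ℝ)+1) * (-(x^2)⁻¹)) x :=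
      (hasDerivAt_inv hx).const_mul _
    exact h1.sub (hc.mul (hG x hx))
  set N : ℝ → ℝ := besselJr (m+1) with hNdef
  set φ : ℝ → ℝ := fun t => -(σ t)⁻¹ * N (s t) * (G (s t))⁻¹ with hφdef
  set Ψ : ℝ → ℝ := fun t =>
      (-(-(1/(2*σ t)) / (σ t)^2) * N (s t) + -(σ t)⁻¹ * (G (s t) * (1/(2*σ t) * ρ))) * (G (s t))⁻¹
      + (-(σ t)⁻¹ * N (s t)) * (-(Gd (s t) * (1/(2*σ t) * ρ)) / (G (s t))^2) with hΨdef
  have hφD : ∀ t : ℝ, -a^2 < t → G (s t) ≠ 0 → HasDerivAt φ (Ψ t) t := by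
    intro t ht hGne
    have hσt := hσd t ht
    have hσtpos := hσpos t ht
    have hst : HasDerivAt s (1/(2*σ t) * ρ) t := hσt.mul_const ρ
    have hstne : s t ≠ 0 := (hspos t ht).ne'
    have hf1 : HasDerivAt (fun u => -(σ u)⁻¹) (-(-(1/(2*σ t)) / (σ t)^2)) t := (hσt.inv hσtpos.ne').neg
    have hf2 : HasDerivAt (fun u => N (s u)) (G (s t) * (1/(2*σ t) * ρ)) t := (hG (s t) hstne).comp t hst
    have hf3 : HasDerivAt (fun u => (G (s u))⁻¹) (-(Gd (s t) * (1/(2*σ t) * ρ)) / (G (s t))^2) t :=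
      (((hGd (s t) hstne).comp t hst).inv hGne)
    exact (hf1.mul hf2).mul hf3
  have hs0ne : s 0 ≠ 0 := by rw [hs0']; exact hs0.ne'
  have hσ0ne : σ 0 ≠ 0 := by rw [hσ0]; exact ha.ne'
  have hGs0ne' : G (s 0) ≠ 0 := by rw [hs0']; exact hGs0ne
  have hσd0 := hσd 0 hma
  have hsD : HasDerivAt s (1/(2*σ 0) * ρ) 0 := hσd0.mul_const ρ
  have hGconts : ContinuousAt (fun t => G (s t)) 0 :=
    (((hGd (s 0) hs0ne).comp 0 hsD).continuousAt)
  have hne : ∀ᶠ t in 𝓝 (0:ℝ), G (s t) ≠ 0 := hGconts.eventually_ne hGs0ne'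
  have hev : ∀ᶠ t in 𝓝 (0:ℝ), HasDerivAt φ (Ψ t) t ∧ G (s t) ≠ 0 ∧ -a^2 < t := by
    filter_upwards [hne, eventually_gt_nhds hma] with t h1 h2
    exact ⟨hφD t h2 h1, h1, h2⟩
  -- differentiability of Ψ at 0
  have hσdiff : DifferentiableAt ℝ σ 0 := hσd0.differentiableAt
  have hsdiff : DifferentiableAt ℝ s 0 := hsD.differentiableAt
  have hNds : DifferentiableAt ℝ (fun t => N (s t)) 0 :=
    ((hG (s 0) hs0ne).differentiableAt).comp 0 hsdiff
  have hGds : DifferentiableAt ℝ (fun t => G (s t)) 0 :=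
    ((hGd (s 0) hs0ne).differentiableAt).comp 0 hsdiff
  have hGdDiff : ∀ x : ℝ, x ≠ 0 → DifferentiableAt ℝ Gd x := by
    intro x hx
    rw [hGddef]
    apply DifferentiableAt.sub
    · exact (((differentiableAt_const _).div (differentiableAt_fun_id (𝕜 := ℝ) (x := x)) hx).mul
        ((hasDerivAt_besselJr m hx).differentiableAt)).sub
        ((hG x hx).differentiableAt)
    · apply DifferentiableAt.add
      · exact ((differentiableAt_const _).mul
          ((((differentiableAt_fun_id (𝕜 := ℝ) (x := x)).pow 2).inv (pow_ne_zero 2 hx)).neg)).mul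
          ((hG x hx).differentiableAt)
      · exact ((differentiableAt_const _).mul
          ((differentiableAt_fun_id (𝕜 := ℝ) (x := x)).inv hx)).mul ((hGd x hx).differentiableAt)
  have hGdds : DifferentiableAt ℝ (fun t => Gd (s t)) 0 := (hGdDiff (s 0) hs0ne).comp 0 hsdiff
  have h2σne : 2 * σ 0 ≠ 0 := by simp [hσ0ne]
  have hA : DifferentiableAt ℝ (fun t => 1/(2*σ t)) 0 :=
    (differentiableAt_const 1).div ((differentiableAt_const 2).mul hσdiff) h2σne
  have hΨD : DifferentiableAt ℝ Ψ 0 := by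
    rw [hΨdef]
    apply DifferentiableAt.add
    · apply DifferentiableAt.mul
      · apply DifferentiableAt.add
        · exact ((hA.neg.div (hσdiff.pow 2) (pow_ne_zero 2 hσ0ne)).neg).mul hNds
        · exact ((hσdiff.inv hσ0ne).neg).mul (hGds.mul (hA.mul (differentiableAt_const ρ)))
      · exact hGds.inv hGs0ne'
    · exact (((hσdiff.inv hσ0ne).neg).mul hNds).mul
        (((hGdds.mul (hA.mul (differentiableAt_const ρ))).neg).div (hGds.pow 2)
          (pow_ne_zero 2 hGs0ne'))
  have hm1 : ((m:ℝ)+1) ≠ 0 := by positivity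
  have hφ0 : φ 0 = ρ/((m:ℝ)+1) := by
    rw [hφdef]; simp only
    rw [hs0', hσ0]
    exact phi0_value a ρ (N (a*ρ)) (G (a*ρ)) ha.ne' hρ.ne' hJ2 m hGs0
  have hGds0 : Gd (a*ρ) = -(N (a*ρ))
      + (((m:ℝ)+1) + ((m:ℝ)+1)^2) * ((a*ρ)^2)⁻¹ * N (a*ρ) := by
    rw [hGddef]; simp only
    rw [hJ1, hGs0]
    field_simp
    ring
  have hΨ0 : Ψ 0 = -(ρ^3)/(2*((m:ℝ)+1)^2) := by
    rw [hΨdef]; simp only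
    rw [hs0', hσ0]
    exact psi0_value a ρ (N (a*ρ)) (G (a*ρ)) (Gd (a*ρ)) ha.ne' hρ.ne' hJ2 m hGs0 hGds0
  set r : ℝ → ℝ := fun t => φ t - φ 0 - Ψ 0 * t with hrdef
  have hrD : ∀ t : ℝ, HasDerivAt φ (Ψ t) t → HasDerivAt r (Ψ t - Ψ 0) t := by
    intro t h
    have hlin : HasDerivAt (fun u : ℝ => φ 0 + Ψ 0 * u) (Ψ 0) t := by
      simpa using ((hasDerivAt_id t).const_mul (Ψ 0)).const_add (φ 0)
    have h2 := h.sub hlin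
    have he : r = fun u => φ u - (φ 0 + Ψ 0 * u) := by
      funext u; rw [hrdef]; ring
    rw [he]
    exact h2
  have hO : (fun t => Ψ t - Ψ 0) =O[𝓝 (0:ℝ)] (fun t : ℝ => t) := by
    simpa using hΨD.isBigO_sub
  obtain ⟨C, hC⟩ := hO.bound
  rw [Metric.eventually_nhds_iff] at hC hev
  obtain ⟨δ1, hδ1, hC⟩ := hC
  obtain ⟨δ2, hδ2, hev2⟩ := hev
  set δ := min δ1 δ2 with hδdef
  have hδ : 0 < δ := lt_min hδ1 hδ2
  have hrbound : ∀ t : ℝ, 0 < t → t < δ → ‖r t‖ ≤ |C| * t * t := by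
    intro t ht htδ
    have hder : ∀ u ∈ Set.Icc (0:ℝ) t, HasDerivWithinAt r (Ψ u - Ψ 0) (Set.Icc (0:ℝ) t) u := by
      intro u hu
      have hu2 : dist u 0 < δ2 := by
        rw [Real.dist_eq, sub_zero, abs_of_nonneg hu.1]
        exact lt_of_le_of_lt hu.2 (lt_of_lt_of_le htδ (min_le_right _ _))
      exact (hrD u (hev2 hu2).1).hasDerivWithinAt
    have hbd : ∀ u ∈ Set.Icc (0:ℝ) t, ‖Ψ u - Ψ 0‖ ≤ |C| * t := by
      intro u hu
      have hu1 : dist u 0 < δ1 := by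
        rw [Real.dist_eq, sub_zero, abs_of_nonneg hu.1]
        exact lt_of_le_of_lt hu.2 (lt_of_lt_of_le htδ (min_le_left _ _))
      calc ‖Ψ u - Ψ 0‖ ≤ C * ‖u‖ := hC hu1
        _ ≤ |C| * ‖u‖ := mul_le_mul_of_nonneg_right (le_abs_self C) (norm_nonneg u)
        _ ≤ |C| * t := by
            apply mul_le_mul_of_nonneg_left _ (abs_nonneg C)
            rw [Real.norm_eq_abs, abs_of_nonneg hu.1]; exact hu.2
    have hmvt := Convex.norm_image_sub_le_of_norm_hasDerivWithin_le hder hbd (convex_Icc (0:ℝ) t)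
      (Set.left_mem_Icc.mpr ht.le) (Set.right_mem_Icc.mpr ht.le)
    have hr0 : r 0 = 0 := by rw [hrdef]; simp
    rw [hr0, sub_zero, sub_zero] at hmvt
    calc ‖r t‖ ≤ |C| * t * ‖t‖ := hmvt
      _ = |C| * t * t := by rw [Real.norm_eq_abs, abs_of_pos ht]
  rw [isBigO_iff]
  refine ⟨|C|, ?_⟩
  have hδ' : 0 < Real.sqrt δ := Real.sqrt_pos.mpr hδ
  filter_upwards [Ioo_mem_nhdsGT hδ'] with lam hlam
  obtain ⟨hl0, hlδ⟩ := hlam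
  have hl2δ : lam^2 < δ := by
    nlinarith [Real.sq_sqrt hδ.le, Real.sqrt_nonneg δ]
  have hl2pos : 0 < lam^2 := by positivity
  have hma2 : -a^2 < lam^2 := by nlinarith
  have hsp := hspos (lam^2) hma2
  have hσp := hσpos (lam^2) hma2
  have hGl : G (s (lam^2)) ≠ 0 := by
    have hd : dist (lam^2) 0 < δ2 := by
      rw [Real.dist_eq, sub_zero, abs_of_pos hl2pos]
      exact lt_of_lt_of_le hl2δ (min_le_right _ _)
    exact (hev2 hd).2.1
  have hEQ : -(lam / Real.sqrt (lam^2+a^2)) * N (Real.sqrt (lam^2+a^2) * ρ)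
        / deriv N (Real.sqrt (lam^2+a^2) * ρ)
      - (lam*ρ/((m:ℝ)+1) - (lam*ρ)^3/(2*((m:ℝ)+1)^2)) = lam * r (lam^2) := by
    have e1 : Real.sqrt (lam^2+a^2) = σ (lam^2) := by rw [hσdef]
    have e2 : σ (lam^2) * ρ = s (lam^2) := by rw [hsdef]
    rw [e1, e2, hderiv _ hsp.ne', hrdef]
    simp only
    rw [hφ0, hΨ0]
    have e3 : φ (lam^2) = -(σ (lam^2))⁻¹ * N (s (lam^2)) * (G (s (lam^2)))⁻¹ := by rw [hφdef]
    rw [e3]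
    field_simp
    ring
  push_cast
  rw [hEQ, norm_mul, Real.norm_eq_abs lam, abs_of_pos hl0,
    Real.norm_eq_abs (lam^5), abs_of_pos (pow_pos hl0 5)]
  have hbound := hrbound (lam^2) hl2pos hl2δ
  calc lam * ‖r (lam^2)‖ ≤ lam * (|C| * lam^2 * lam^2) := mul_le_mul_of_nonneg_left hbound hl0.le
    _ = |C| * lam^5 := by ring
end
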